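/- arXiv:2503.10862 — 4 statements merged into one kernel-verified Lean document; each statement's English description precedes it below -/
import Mathlib

section
/- The vertices of the polytope ASM_n are exactly the n×n alternating sign matrices. -/
open scoped BigOperators
open scoped Classical

namespace ASMPaper

variable {n : ℕ}

/-- Partial row sum `W_{ij} = ∑_{j' ≤ j} a_{i j'}`. -/
def rowPartial (A : Matrix (Fin n) (Fin n) ℝ) (i j : Fin n) : ℝ :=
  ∑ j' ∈ Finset.univ.filter (fun j' : Fin n => j' ≤ j), A i j'

/-- Partial column sum `N_{ij} = ∑_{i' ≤ i} a_{i' j}`. -/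
def colPartial (A : Matrix (Fin n) (Fin n) ℝ) (i j : Fin n) : ℝ :=
  ∑ i' ∈ Finset.univ.filter (fun i' : Fin n => i' ≤ i), A i' j

/-- An alternating sign matrix: entries in {0,1,-1}, rows and columns sum to 1,
nonzero entries alternating in sign along rows and columns (equivalently, all
partial row and column sums lie in {0,1}). -/
def IsASM (A : Matrix (Fin n) (Fin n) ℝ) : Prop :=
  (∀ i j, A i j = 0 ∨ A i j = 1 ∨ A i j = -1) ∧
  (∀ i j, rowPartial A i j = 0 ∨ rowPartial A i j = 1) ∧
  (∀ i j, colPartial A i j = 0 ∨ colPartial A i j = 1) ∧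
  (∀ i, ∑ j, A i j = 1) ∧
  (∀ j, ∑ i, A i j = 1)

/-- The ASM polytope: convex hull of the `n × n` alternating sign matrices. -/
def ASMPolytope (n : ℕ) : Set (Matrix (Fin n) (Fin n) ℝ) :=
  convexHull ℝ {A : Matrix (Fin n) (Fin n) ℝ | IsASM A}

/-- A face of a convex set: a convex extreme subset. -/
def IsFaceOf (F P : Set (Matrix (Fin n) (Fin n) ℝ)) : Prop :=
  IsExtreme ℝ P F ∧ Convex ℝ F

/-- A facet: a nonempty face of dimension one less. -/
def IsFacetOf (G F : Set (Matrix (Fin n) (Fin n) ℝ)) : Prop :=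
  IsFaceOf G F ∧ G.Nonempty ∧
    Module.finrank ℝ (vectorSpan ℝ G) + 1 = Module.finrank ℝ (vectorSpan ℝ F)

/-- The ASMs (vertices) belonging to a face `F`. -/
def faceASMs (F : Set (Matrix (Fin n) (Fin n) ℝ)) : Set (Matrix (Fin n) (Fin n) ℝ) :=
  {A | A ∈ F ∧ IsASM A}

/-- `A` and `B` are estranged in `F` if no proper face of `F` contains both. -/
def Estranged (F : Set (Matrix (Fin n) (Fin n) ℝ)) (A B : Matrix (Fin n) (Fin n) ℝ) : Prop :=
  ∀ F', IsFaceOf F' F → F' ≠ F → ¬(A ∈ F' ∧ B ∈ F')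

/-- The doubly directed graph of a set `X` of ASMs: grid vertices `(i,j)`, with an
(undirected) edge between orthogonally adjacent grid vertices whenever the
corresponding grid edge receives both orientations among the simple flow grids of
members of `X` (the orientation of a grid edge in the simple flow grid of `A` is
determined by the relevant partial sum of `A`). -/
def ddGraph (X : Set (Matrix (Fin n) (Fin n) ℝ)) : SimpleGraph (Fin n × Fin n) where
  Adj v w :=
    (v.1 = w.1 ∧ ((v.2 : ℕ) + 1 = (w.2 : ℕ) ∨ (w.2 : ℕ) + 1 = (v.2 : ℕ)) ∧
      ∃ A ∈ X, ∃ B ∈ X, rowPartial A v.1 (min v.2 w.2) ≠ rowPartial B v.1 (min v.2 w.2)) ∨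
    (v.2 = w.2 ∧ ((v.1 : ℕ) + 1 = (w.1 : ℕ) ∨ (w.1 : ℕ) + 1 = (v.1 : ℕ)) ∧
      ∃ A ∈ X, ∃ B ∈ X, colPartial A (min v.1 w.1) v.2 ≠ colPartial B (min v.1 w.1) v.2)
  symm := by
    constructor
    rintro v w (⟨h1, h2, h3⟩ | ⟨h1, h2, h3⟩)
    · exact Or.inl ⟨h1.symm, h2.symm, by rw [min_comm, ← h1]; exact h3⟩
    · exact Or.inr ⟨h1.symm, h2.symm, by rw [min_comm, ← h1]; exact h3⟩
  loopless := by
    constructor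
    rintro v (⟨-, h2, -⟩ | ⟨-, h2, -⟩) <;> rcases h2 with h | h <;> omega

/-- Degree of a grid vertex in the doubly directed graph. -/
noncomputable def ddDegree (X : Set (Matrix (Fin n) (Fin n) ℝ)) (v : Fin n × Fin n) : ℕ :=
  ((ddGraph X).neighborSet v).ncard

/-- The (non-isolated) vertices of the doubly directed graph. -/
def ddSupport (X : Set (Matrix (Fin n) (Fin n) ℝ)) : Set (Fin n × Fin n) :=
  {v | ∃ w, (ddGraph X).Adj v w}

/-- The doubly directed graph is connected (on its support). -/
def DDConnected (X : Set (Matrix (Fin n) (Fin n) ℝ)) : Prop :=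
  ∀ v ∈ ddSupport X, ∀ w ∈ ddSupport X, (ddGraph X).Reachable v w


lemma rowPartial_linear (a b : ℝ) (x y : Matrix (Fin n) (Fin n) ℝ) (i j : Fin n) :
    rowPartial (a • x + b • y) i j = a * rowPartial x i j + b * rowPartial y i j := by
  simp [rowPartial, Matrix.add_apply, Matrix.smul_apply, smul_eq_mul,
    Finset.sum_add_distrib, Finset.mul_sum]

lemma rowPartial_split (z : Matrix (Fin n) (Fin n) ℝ) (i j : Fin n) :
    rowPartial z i j = (∑ j' ∈ Finset.univ.filter (fun j' : Fin n => j' < j), z i j') + z i j := by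
  have h : Finset.univ.filter (fun j' : Fin n => j' ≤ j)
      = insert j (Finset.univ.filter (fun j' : Fin n => j' < j)) := by
    ext k; simp [le_iff_lt_or_eq, or_comm, eq_comm]
  rw [rowPartial, h, Finset.sum_insert (by simp), add_comm]

lemma rowPartial_inj {x y : Matrix (Fin n) (Fin n) ℝ} (i : Fin n)
    (h : ∀ j, rowPartial x i j = rowPartial y i j) : ∀ j, x i j = y i j := by
  have key : ∀ m : ℕ, ∀ j : Fin n, (j : ℕ) < m → x i j = y i j := by
    intro m
    induction m with
    | zero => intro j hj; omega
    | succ m ih =>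
      intro j hj
      have hx := rowPartial_split x i j
      have hy := rowPartial_split y i j
      have hsum : (∑ j' ∈ Finset.univ.filter (fun j' : Fin n => j' < j), x i j')
          = ∑ j' ∈ Finset.univ.filter (fun j' : Fin n => j' < j), y i j' := by
        refine Finset.sum_congr rfl fun k hk => ?_
        simp only [Finset.mem_filter] at hk
        exact ih k (by have := hk.2; omega)
      have := h j
      rw [hx, hy, hsum] at this
      linarith
  exact fun j => key n j j.isLt

lemma rowPartial_mem_Icc_of_mem_polytope {x : Matrix (Fin n) (Fin n) ℝ}
    (hx : x ∈ ASMPolytope n) (i j : Fin n) : rowPartial x i j ∈ Set.Icc (0 : ℝ) 1 := by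
  have hsub : ASMPolytope n ⊆ {z : Matrix (Fin n) (Fin n) ℝ |
      ∀ i j, rowPartial z i j ∈ Set.Icc (0 : ℝ) 1} := by
    apply convexHull_min
    · intro A hA i j
      rcases hA.2.1 i j with h | h <;> rw [h] <;> constructor <;> norm_num
    · intro u hu v hv a b ha hb hab i j
      have h1 := hu i j
      have h2 := hv i j
      simp only [Set.mem_Icc] at h1 h2 ⊢
      rw [rowPartial_linear]
      constructor
      · nlinarith [mul_nonneg ha h1.1, mul_nonneg hb h2.1]
      · nlinarith [mul_le_mul_of_nonneg_left h1.2 ha, mul_le_mul_of_nonneg_left h2.2 hb]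
  exact hsub hx i j

/-- the vertices (extreme points) of `ASM_n` are exactly the ASMs. -/
theorem asm_vertices (n : ℕ) :
    Set.extremePoints ℝ (ASMPolytope n) = {A : Matrix (Fin n) (Fin n) ℝ | IsASM A} := by
  apply Set.Subset.antisymm
  · exact extremePoints_convexHull_subset
  · intro A hA
    rw [mem_extremePoints]
    refine ⟨subset_convexHull ℝ _ hA, ?_⟩
    intro x₁ hx₁ x₂ hx₂ hseg
    rw [openSegment_eq_image] at hseg
    obtain ⟨t, ⟨ht0, ht1⟩, hteq⟩ := hseg
    set a : ℝ := 1 - t with ha_def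
    set b : ℝ := t with hb_def
    have ha : 0 < a := by simp [ha_def]; linarith
    have hb : 0 < b := ht0
    have hab : a + b = 1 := by simp [ha_def]
    have heqA : a • x₁ + b • x₂ = A := by
      rw [← hteq]
    have hr : ∀ i j, rowPartial x₁ i j = rowPartial A i j ∧
        rowPartial x₂ i j = rowPartial A i j := by
      intro i j
      have h1 := rowPartial_mem_Icc_of_mem_polytope hx₁ i j
      have h2 := rowPartial_mem_Icc_of_mem_polytope hx₂ i j
      simp only [Set.mem_Icc] at h1 h2
      have heq : a * rowPartial x₁ i j + b * rowPartial x₂ i j = rowPartial A i j := by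
        rw [← rowPartial_linear, heqA]
      rcases hA.2.1 i j with h0 | h01
      · rw [h0] at heq ⊢
        constructor <;> nlinarith [mul_nonneg ha.le h1.1, mul_nonneg hb.le h2.1]
      · rw [h01] at heq ⊢
        constructor <;>
          nlinarith [mul_le_mul_of_nonneg_left h1.2 ha.le,
            mul_le_mul_of_nonneg_left h2.2 hb.le]
    constructor
    · ext i j; exact rowPartial_inj i (fun j => (hr i j).1) j
    · ext i j; exact rowPartial_inj i (fun j => (hr i j).2) j
end ASMPaper
end

section
/- For n ≥ 3, the dimension of the polytope ASM_n is (n-1)^2. -/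
open scoped BigOperators
open scoped Classical

namespace ASMPaper

variable {n : ℕ}

section Dim

variable {m : ℕ}

/-- Permutation matrix. -/
noncomputable def permMat {n : ℕ} (σ : Equiv.Perm (Fin n)) : Matrix (Fin n) (Fin n) ℝ :=
  fun i j => if σ i = j then 1 else 0

lemma isASM_permMat {n : ℕ} (σ : Equiv.Perm (Fin n)) : IsASM (permMat σ) := by
  refine ⟨fun i j => ?_, fun i j => ?_, fun i j => ?_, fun i => ?_, fun j => ?_⟩
  · unfold permMat; split <;> simp
  · unfold rowPartial permMat
    rw [Finset.sum_ite_eq]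
    split <;> simp
  · unfold colPartial permMat
    have : ∀ i' : Fin n, (if σ i' = j then (1:ℝ) else 0) = if i' = σ.symm j then 1 else 0 := by
      intro i'; congr 1; simp [Equiv.eq_symm_apply, eq_comm]
    simp_rw [this]
    rw [Finset.sum_ite_eq']
    split <;> simp
  · unfold permMat; rw [Finset.sum_ite_eq]; simp
  · unfold permMat
    have : ∀ i : Fin n, (if σ i = j then (1:ℝ) else 0) = if i = σ.symm j then 1 else 0 := by
      intro i; congr 1; simp [Equiv.eq_symm_apply, eq_comm]
    simp_rw [this]
    rw [Finset.sum_ite_eq']; simp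

/-- Basis family for the dimension count. -/
noncomputable def fvec (m : ℕ) (p : Fin m × Fin m) : Matrix (Fin (m+1)) (Fin (m+1)) ℝ :=
  fun a b => ((if a = p.1.castSucc then (1:ℝ) else 0) - (if a = Fin.last m then 1 else 0)) *
             ((if b = p.2.castSucc then (1:ℝ) else 0) - (if b = Fin.last m then 1 else 0))

lemma fvec_eq_sub (p : Fin m × Fin m) :
    fvec m p = permMat (Equiv.swap p.1.castSucc p.2.castSucc) -
      permMat (Equiv.swap p.2.castSucc (Fin.last m) * Equiv.swap p.1.castSucc p.2.castSucc) := by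
  obtain ⟨i, j⟩ := p
  have hi : i.castSucc ≠ Fin.last m := Fin.ne_last_of_lt (Fin.castSucc_lt_last i)
  have hj : j.castSucc ≠ Fin.last m := Fin.ne_last_of_lt (Fin.castSucc_lt_last j)
  funext a b
  simp only [fvec, permMat, Matrix.sub_apply, Equiv.Perm.mul_apply]
  rcases eq_or_ne a i.castSucc with rfl | ha
  · simp only [Equiv.swap_apply_left, if_pos rfl, if_neg hi]
    (simp only [eq_comm]; split_ifs <;> first | ring | (exfalso; grind))
  · rcases eq_or_ne a (Fin.last m) with rfl | ha'
    · simp only [Equiv.swap_apply_of_ne_of_ne (Ne.symm hi) (Ne.symm hj),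
        Equiv.swap_apply_right, if_neg ha, if_pos rfl]
      (simp only [eq_comm]; split_ifs <;> first | ring | (exfalso; grind))
    · have h1 : Equiv.swap i.castSucc j.castSucc a ≠ j.castSucc ∧
          Equiv.swap i.castSucc j.castSucc a ≠ Fin.last m ∨
          Equiv.swap i.castSucc j.castSucc a = i.castSucc ∧ i.castSucc ≠ j.castSucc := by
        rcases eq_or_ne a j.castSucc with rfl | ha''
        · right
          refine ⟨Equiv.swap_apply_right _ _, fun h => ha (h ▸ rfl)⟩
        · left
          rw [Equiv.swap_apply_of_ne_of_ne ha ha'']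
          exact ⟨ha'', ha'⟩
      rw [if_neg ha, if_neg ha']
      rcases h1 with ⟨h2, h3⟩ | ⟨h2, h3⟩
      · simp only [Equiv.swap_apply_of_ne_of_ne h2 h3]
        (simp only [eq_comm]; split_ifs <;> first | ring | (exfalso; grind))
      · simp only [h2, Equiv.swap_apply_of_ne_of_ne h3 hi]
        (simp only [eq_comm]; split_ifs <;> first | ring | (exfalso; grind))

lemma fvec_apply_castSucc (q : Fin m × Fin m) (i j : Fin m) :
    fvec m q i.castSucc j.castSucc = if q = (i, j) then 1 else 0 := by
  have hi : i.castSucc ≠ Fin.last m := Fin.ne_last_of_lt (Fin.castSucc_lt_last i)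
  have hj : j.castSucc ≠ Fin.last m := Fin.ne_last_of_lt (Fin.castSucc_lt_last j)
  by_cases h : q = (i, j)
  · subst h
    simp [fvec, hi, hj]
  · rw [if_neg h]
    have h' : q.1 ≠ i ∨ q.2 ≠ j := by
      by_contra hcon
      push_neg at hcon
      exact h (Prod.ext hcon.1 hcon.2)
    simp only [fvec, if_neg hi, if_neg hj, sub_zero]
    rcases h' with h' | h'
    · rw [if_neg (fun hh => h' (Fin.castSucc_inj.mp hh).symm), zero_mul]
    · rw [if_neg (fun hh => h' (Fin.castSucc_inj.mp hh).symm), mul_zero]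

lemma fvec_linearIndependent : LinearIndependent ℝ (fvec m) := by
  rw [Fintype.linearIndependent_iff]
  intro g hg p
  have h := congrFun (congrFun hg p.1.castSucc) p.2.castSucc
  simp only [Matrix.sum_apply, Matrix.smul_apply, smul_eq_mul, Matrix.zero_apply,
    fvec_apply_castSucc, Prod.mk.eta, mul_ite, mul_one, mul_zero] at h
  rwa [Finset.sum_ite_eq' Finset.univ p g, if_pos (Finset.mem_univ p)] at h

lemma rowsum_aux (M : Matrix (Fin (m+1)) (Fin (m+1)) ℝ)
    (hr : ∀ i, ∑ b, M i b = 0) (i : Fin m) (b : Fin (m+1)) :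
    ∑ j : Fin m, M i.castSucc j.castSucc *
      ((if b = j.castSucc then (1:ℝ) else 0) - (if b = Fin.last m then 1 else 0)) =
    M i.castSucc b := by
  induction b using Fin.lastCases with
  | last =>
      have h := hr i.castSucc
      rw [Fin.sum_univ_castSucc] at h
      have key : ∀ j : Fin m, M i.castSucc j.castSucc *
          ((if Fin.last m = j.castSucc then (1:ℝ) else 0) -
            (if Fin.last m = Fin.last m then 1 else 0)) = -(M i.castSucc j.castSucc) := by
        intro j
        rw [if_neg (Fin.ne_last_of_lt (Fin.castSucc_lt_last j)).symm, if_pos rfl]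
        ring
      rw [Finset.sum_congr rfl fun j _ => key j, Finset.sum_neg_distrib]
      linarith
  | cast j0 =>
      have key : ∀ j : Fin m, M i.castSucc j.castSucc *
          ((if j0.castSucc = j.castSucc then (1:ℝ) else 0) -
            (if j0.castSucc = Fin.last m then 1 else 0)) =
          if j0 = j then M i.castSucc j.castSucc else 0 := by
        intro j
        rw [if_neg (Fin.ne_last_of_lt (Fin.castSucc_lt_last j0))]
        by_cases hjj : j0 = j
        · subst hjj; simp
        · rw [if_neg (fun hh => hjj (Fin.castSucc_inj.mp hh)), if_neg hjj]
          ring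
      rw [Finset.sum_congr rfl fun j _ => key j, Finset.sum_ite_eq]
      simp

lemma colsum_aux (M : Matrix (Fin (m+1)) (Fin (m+1)) ℝ)
    (hc : ∀ b, ∑ a, M a b = 0) (a b : Fin (m+1)) :
    ∑ i : Fin m, ((if a = i.castSucc then (1:ℝ) else 0) -
      (if a = Fin.last m then 1 else 0)) * M i.castSucc b = M a b := by
  induction a using Fin.lastCases with
  | last =>
      have h := hc b
      rw [Fin.sum_univ_castSucc] at h
      have key : ∀ i : Fin m, ((if Fin.last m = i.castSucc then (1:ℝ) else 0) -
          (if Fin.last m = Fin.last m then 1 else 0)) * M i.castSucc b =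
          -(M i.castSucc b) := by
        intro i
        rw [if_neg (Fin.ne_last_of_lt (Fin.castSucc_lt_last i)).symm, if_pos rfl]
        ring
      rw [Finset.sum_congr rfl fun i _ => key i, Finset.sum_neg_distrib]
      linarith
  | cast i0 =>
      have key : ∀ i : Fin m, ((if i0.castSucc = i.castSucc then (1:ℝ) else 0) -
          (if i0.castSucc = Fin.last m then 1 else 0)) * M i.castSucc b =
          if i0 = i then M i.castSucc b else 0 := by
        intro i
        rw [if_neg (Fin.ne_last_of_lt (Fin.castSucc_lt_last i0))]
        by_cases hii : i0 = i
        · subst hii; simp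
        · rw [if_neg (fun hh => hii (Fin.castSucc_inj.mp hh)), if_neg hii]
          ring
      rw [Finset.sum_congr rfl fun i _ => key i, Finset.sum_ite_eq]
      simp

lemma mem_span_fvec (M : Matrix (Fin (m+1)) (Fin (m+1)) ℝ)
    (hr : ∀ i, ∑ j, M i j = 0) (hc : ∀ j, ∑ i, M i j = 0) :
    M ∈ Submodule.span ℝ (Set.range (fvec m)) := by
  have key : M = ∑ p : Fin m × Fin m, M p.1.castSucc p.2.castSucc • fvec m p := by
    funext a b
    have h1 : (∑ p : Fin m × Fin m, M p.1.castSucc p.2.castSucc • fvec m p) a b =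
        ∑ p : Fin m × Fin m, M p.1.castSucc p.2.castSucc * fvec m p a b := by
      simp only [Matrix.sum_apply, Matrix.smul_apply, smul_eq_mul]
    rw [h1, Fintype.sum_prod_type]
    have h2 : ∀ i : Fin m, ∑ j : Fin m, M i.castSucc j.castSucc * fvec m (i, j) a b =
        ((if a = i.castSucc then (1:ℝ) else 0) - (if a = Fin.last m then 1 else 0)) *
          M i.castSucc b := by
      intro i
      have e : ∀ j : Fin m, M i.castSucc j.castSucc * fvec m (i, j) a b =
          ((if a = i.castSucc then (1:ℝ) else 0) - (if a = Fin.last m then 1 else 0)) *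
            (M i.castSucc j.castSucc *
              ((if b = j.castSucc then (1:ℝ) else 0) - (if b = Fin.last m then 1 else 0))) := by
        intro j
        simp only [fvec]
        ring
      rw [Finset.sum_congr rfl fun j _ => e j, ← Finset.mul_sum, rowsum_aux M hr i b]
    rw [Finset.sum_congr rfl fun i _ => h2 i, colsum_aux M hc a b]
  rw [key]
  exact Submodule.sum_mem _ fun p _ =>
    Submodule.smul_mem _ _ (Submodule.subset_span ⟨p, rfl⟩)

end Dim

/-- for `n ≥ 3`, the dimension of `ASM_n` is `(n-1)^2`. -/
theorem asm_dimension (n : ℕ) (hn : 3 ≤ n) :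
    Module.finrank ℝ (vectorSpan ℝ (ASMPolytope n)) = (n - 1) ^ 2 := by
  obtain ⟨m, rfl⟩ : ∃ m, n = m + 1 := ⟨n - 1, by omega⟩
  have h1 : vectorSpan ℝ (ASMPolytope (m + 1)) =
      vectorSpan ℝ {A : Matrix (Fin (m+1)) (Fin (m+1)) ℝ | IsASM A} := by
    rw [← direction_affineSpan, ← direction_affineSpan, ASMPolytope, affineSpan_convexHull]
  have hspan : vectorSpan ℝ {A : Matrix (Fin (m+1)) (Fin (m+1)) ℝ | IsASM A} =
      Submodule.span ℝ (Set.range (fvec m)) := by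
    apply le_antisymm
    · rw [vectorSpan_def]
      apply Submodule.span_le.2
      rintro v ⟨A, hA, B, hB, rfl⟩
      show A - B ∈ _
      apply mem_span_fvec
      · intro i
        have : ∑ j, (A - B) i j = ∑ j, (A i j - B i j) := rfl
        rw [this, Finset.sum_sub_distrib, hA.2.2.2.1 i, hB.2.2.2.1 i, sub_self]
      · intro j
        have : ∑ i, (A - B) i j = ∑ i, (A i j - B i j) := rfl
        rw [this, Finset.sum_sub_distrib, hA.2.2.2.2 j, hB.2.2.2.2 j, sub_self]
    · apply Submodule.span_le.2
      rintro v ⟨p, rfl⟩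
      rw [vectorSpan_def]
      apply Submodule.subset_span
      exact ⟨permMat _, isASM_permMat _, permMat _, isASM_permMat _,
        (vsub_eq_sub _ _).trans (fvec_eq_sub p).symm⟩
  rw [h1, hspan, finrank_span_eq_card fvec_linearIndependent]
  simp [sq]

end ASMPaper
end

section
/- Let A and B be n×n ASMs and let G be the doubly directed graph of {A,B}. If a_{ij}=1 and b_{ij}=-1 then grid vertex (i,j) has degree 4 in G. Conversely, if (i,j) has degree 4 in G, then a_{ij}·b_{ij} = -1 or a_{ij} = b_{ij} = 0. -/
open scoped BigOperators
open scoped Classical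

namespace ASMPaper

variable {n : ℕ}

lemma rowPartial_step (A : Matrix (Fin n) (Fin n) ℝ) (i j j' : Fin n)
    (h : (j' : ℕ) + 1 = (j : ℕ)) :
    rowPartial A i j = rowPartial A i j' + A i j := by
  unfold rowPartial
  have hset : Finset.univ.filter (fun x : Fin n => x ≤ j)
      = insert j (Finset.univ.filter (fun x : Fin n => x ≤ j')) := by
    ext x
    simp only [Finset.mem_filter, Finset.mem_univ, true_and, Finset.mem_insert,
      Fin.le_def, Fin.ext_iff]
    omega
  have hnm : j ∉ Finset.univ.filter (fun x : Fin n => x ≤ j') := by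
    simp only [Finset.mem_filter, Finset.mem_univ, true_and, Fin.le_def]
    omega
  rw [hset, Finset.sum_insert hnm]
  ring

lemma rowPartial_zero' (A : Matrix (Fin n) (Fin n) ℝ) (i j : Fin n)
    (h : (j : ℕ) = 0) : rowPartial A i j = A i j := by
  unfold rowPartial
  have hset : Finset.univ.filter (fun x : Fin n => x ≤ j) = {j} := by
    ext x
    simp only [Finset.mem_filter, Finset.mem_univ, true_and, Finset.mem_singleton,
      Fin.le_def, Fin.ext_iff]
    omega
  rw [hset, Finset.sum_singleton]

lemma rowPartial_last (A : Matrix (Fin n) (Fin n) ℝ) (i j : Fin n)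
    (h : (j : ℕ) + 1 = n) : rowPartial A i j = ∑ j', A i j' := by
  unfold rowPartial
  congr 1
  ext x
  have hx := x.is_lt
  simp only [Finset.mem_filter, Finset.mem_univ, true_and, Fin.le_def, iff_true]
  omega

lemma colPartial_step (A : Matrix (Fin n) (Fin n) ℝ) (i i' j : Fin n)
    (h : (i' : ℕ) + 1 = (i : ℕ)) :
    colPartial A i j = colPartial A i' j + A i j := by
  unfold colPartial
  have hset : Finset.univ.filter (fun x : Fin n => x ≤ i)
      = insert i (Finset.univ.filter (fun x : Fin n => x ≤ i')) := by
    ext x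
    simp only [Finset.mem_filter, Finset.mem_univ, true_and, Finset.mem_insert,
      Fin.le_def, Fin.ext_iff]
    omega
  have hnm : i ∉ Finset.univ.filter (fun x : Fin n => x ≤ i') := by
    simp only [Finset.mem_filter, Finset.mem_univ, true_and, Fin.le_def]
    omega
  rw [hset, Finset.sum_insert hnm]
  ring

lemma colPartial_zero' (A : Matrix (Fin n) (Fin n) ℝ) (i j : Fin n)
    (h : (i : ℕ) = 0) : colPartial A i j = A i j := by
  unfold colPartial
  have hset : Finset.univ.filter (fun x : Fin n => x ≤ i) = {i} := by
    ext x
    simp only [Finset.mem_filter, Finset.mem_univ, true_and, Finset.mem_singleton,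
      Fin.le_def, Fin.ext_iff]
    omega
  rw [hset, Finset.sum_singleton]

lemma colPartial_last (A : Matrix (Fin n) (Fin n) ℝ) (i j : Fin n)
    (h : (i : ℕ) + 1 = n) : colPartial A i j = ∑ i', A i' j := by
  unfold colPartial
  congr 1
  ext x
  have hx := x.is_lt
  simp only [Finset.mem_filter, Finset.mem_univ, true_and, Fin.le_def, iff_true]
  omega

/-- if `a_{ij} = 1` and `b_{ij} = -1` then `(i,j)` has degree 4 in the
doubly directed graph of `{A,B}`; conversely degree 4 forces `a_{ij}·b_{ij} = -1` or
`a_{ij} = b_{ij} = 0`. -/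
theorem degree_four (n : ℕ) (A B : Matrix (Fin n) (Fin n) ℝ)
    (hA : IsASM A) (hB : IsASM B) (i j : Fin n) :
    ((A i j = 1 ∧ B i j = -1) →
      ddDegree ({A, B} : Set (Matrix (Fin n) (Fin n) ℝ)) (i, j) = 4) ∧
    (ddDegree ({A, B} : Set (Matrix (Fin n) (Fin n) ℝ)) (i, j) = 4 →
      A i j * B i j = -1 ∨ (A i j = 0 ∧ B i j = 0)) := by
  obtain ⟨hAv, hArow, hAcol, hArs, hAcs⟩ := hA
  obtain ⟨hBv, hBrow, hBcol, hBrs, hBcs⟩ := hB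
  have hAX : A ∈ ({A, B} : Set (Matrix (Fin n) (Fin n) ℝ)) := Set.mem_insert _ _
  have hBX : B ∈ ({A, B} : Set (Matrix (Fin n) (Fin n) ℝ)) := Set.mem_insert_of_mem _ rfl
  constructor
  · rintro ⟨ha1, hb1⟩
    have hj0 : (j : ℕ) ≠ 0 := by
      intro h0
      have hz := rowPartial_zero' B i j h0
      rcases hBrow i j with h | h <;> rw [hz, hb1] at h <;> norm_num at h
    have hi0 : (i : ℕ) ≠ 0 := by
      intro h0
      have hz := colPartial_zero' B i j h0
      rcases hBcol i j with h | h <;> rw [hz, hb1] at h <;> norm_num at h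
    obtain ⟨jl, hjl1⟩ : ∃ jl : Fin n, (jl : ℕ) + 1 = (j : ℕ) :=
      ⟨⟨(j : ℕ) - 1, lt_of_le_of_lt (Nat.sub_le _ _) j.is_lt⟩, by simp; omega⟩
    obtain ⟨il, hil1⟩ : ∃ il : Fin n, (il : ℕ) + 1 = (i : ℕ) :=
      ⟨⟨(i : ℕ) - 1, lt_of_le_of_lt (Nat.sub_le _ _) i.is_lt⟩, by simp; omega⟩
    have hWA : rowPartial A i jl = 0 ∧ rowPartial A i j = 1 := by
      have hs := rowPartial_step A i j jl hjl1
      rw [ha1] at hs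
      rcases hArow i jl with h2 | h2 <;> rcases hArow i j with h1 | h1 <;>
        exact ⟨by linarith, by linarith⟩
    have hWB : rowPartial B i jl = 1 ∧ rowPartial B i j = 0 := by
      have hs := rowPartial_step B i j jl hjl1
      rw [hb1] at hs
      rcases hBrow i jl with h2 | h2 <;> rcases hBrow i j with h1 | h1 <;>
        exact ⟨by linarith, by linarith⟩
    have hNA : colPartial A il j = 0 ∧ colPartial A i j = 1 := by
      have hs := colPartial_step A i il j hil1
      rw [ha1] at hs
      rcases hAcol il j with h2 | h2 <;> rcases hAcol i j with h1 | h1 <;>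
        exact ⟨by linarith, by linarith⟩
    have hNB : colPartial B il j = 1 ∧ colPartial B i j = 0 := by
      have hs := colPartial_step B i il j hil1
      rw [hb1] at hs
      rcases hBcol il j with h2 | h2 <;> rcases hBcol i j with h1 | h1 <;>
        exact ⟨by linarith, by linarith⟩
    have hjn : (j : ℕ) + 1 < n := by
      rcases Nat.lt_or_ge ((j : ℕ) + 1) n with h | h
      · exact h
      · exfalso
        have hlast : (j : ℕ) + 1 = n := by have := j.is_lt; omega
        have h1 : rowPartial B i j = 1 := by
          rw [rowPartial_last B i j hlast, hBrs i]
        rw [hWB.2] at h1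
        norm_num at h1
    have hin : (i : ℕ) + 1 < n := by
      rcases Nat.lt_or_ge ((i : ℕ) + 1) n with h | h
      · exact h
      · exfalso
        have hlast : (i : ℕ) + 1 = n := by have := i.is_lt; omega
        have h1 : colPartial B i j = 1 := by
          rw [colPartial_last B i j hlast, hBcs j]
        rw [hNB.2] at h1
        norm_num at h1
    obtain ⟨jr, hjr1⟩ : ∃ jr : Fin n, (j : ℕ) + 1 = (jr : ℕ) := ⟨⟨(j : ℕ) + 1, hjn⟩, rfl⟩
    obtain ⟨ir, hir1⟩ : ∃ ir : Fin n, (i : ℕ) + 1 = (ir : ℕ) := ⟨⟨(i : ℕ) + 1, hin⟩, rfl⟩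
    have hset : (ddGraph ({A, B} : Set (Matrix (Fin n) (Fin n) ℝ))).neighborSet (i, j)
        = {(i, jl), (i, jr), (il, j), (ir, j)} := by
      ext w
      obtain ⟨wi, wj⟩ := w
      simp only [SimpleGraph.mem_neighborSet]
      constructor
      · intro hadj
        rcases hadj with ⟨h1, h2, -⟩ | ⟨h1, h2, -⟩
        · have h1' : (i : ℕ) = (wi : ℕ) := congrArg Fin.val h1
          have h2' : (j : ℕ) + 1 = (wj : ℕ) ∨ (wj : ℕ) + 1 = (j : ℕ) := h2
          simp only [Set.mem_insert_iff, Set.mem_singleton_iff, Prod.mk.injEq, Fin.ext_iff]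
          omega
        · have h1' : (j : ℕ) = (wj : ℕ) := congrArg Fin.val h1
          have h2' : (i : ℕ) + 1 = (wi : ℕ) ∨ (wi : ℕ) + 1 = (i : ℕ) := h2
          simp only [Set.mem_insert_iff, Set.mem_singleton_iff, Prod.mk.injEq, Fin.ext_iff]
          omega
      · intro hw
        simp only [Set.mem_insert_iff, Set.mem_singleton_iff] at hw
        rcases hw with h | h | h | h <;> rw [h]
        · refine Or.inl ⟨rfl, Or.inr hjl1, A, hAX, B, hBX, ?_⟩
          show rowPartial A i (min j jl) ≠ rowPartial B i (min j jl)
          rw [min_eq_right (show jl ≤ j by rw [Fin.le_def]; omega), hWA.1, hWB.1]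
          norm_num
        · refine Or.inl ⟨rfl, Or.inl hjr1, A, hAX, B, hBX, ?_⟩
          show rowPartial A i (min j jr) ≠ rowPartial B i (min j jr)
          rw [min_eq_left (show j ≤ jr by rw [Fin.le_def]; omega), hWA.2, hWB.2]
          norm_num
        · refine Or.inr ⟨rfl, Or.inr hil1, A, hAX, B, hBX, ?_⟩
          show colPartial A (min i il) j ≠ colPartial B (min i il) j
          rw [min_eq_right (show il ≤ i by rw [Fin.le_def]; omega), hNA.1, hNB.1]
          norm_num
        · refine Or.inr ⟨rfl, Or.inl hir1, A, hAX, B, hBX, ?_⟩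
          show colPartial A (min i ir) j ≠ colPartial B (min i ir) j
          rw [min_eq_left (show i ≤ ir by rw [Fin.le_def]; omega), hNA.2, hNB.2]
          norm_num
    have e1 : ((i, jl) : Fin n × Fin n) ∉ ({(i, jr), (il, j), (ir, j)} : Set (Fin n × Fin n)) := by
      simp only [Set.mem_insert_iff, Set.mem_singleton_iff, Prod.mk.injEq, Fin.ext_iff]
      omega
    have e2 : ((i, jr) : Fin n × Fin n) ∉ ({(il, j), (ir, j)} : Set (Fin n × Fin n)) := by
      simp only [Set.mem_insert_iff, Set.mem_singleton_iff, Prod.mk.injEq, Fin.ext_iff]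
      omega
    have e3 : ((il, j) : Fin n × Fin n) ≠ (ir, j) := by
      simp only [ne_eq, Prod.mk.injEq, Fin.ext_iff]
      omega
    show ((ddGraph ({A, B} : Set (Matrix (Fin n) (Fin n) ℝ))).neighborSet (i, j)).ncard = 4
    rw [hset, Set.ncard_insert_of_notMem e1 (Set.toFinite _),
        Set.ncard_insert_of_notMem e2 (Set.toFinite _), Set.ncard_pair e3]
  · intro h4
    have hn0 : 0 < n := i.pos
    have hb3 : ∀ x1 x2 x3 : Fin n × Fin n,
        (ddGraph ({A, B} : Set (Matrix (Fin n) (Fin n) ℝ))).neighborSet (i, j) ⊆ {x1, x2, x3} →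
          False := by
      intro x1 x2 x3 hsub
      have hle : ((ddGraph ({A, B} : Set (Matrix (Fin n) (Fin n) ℝ))).neighborSet (i, j)).ncard
          ≤ 3 := by
        refine le_trans (Set.ncard_le_ncard hsub (Set.toFinite _)) ?_
        refine le_trans (Set.ncard_insert_le _ _) ?_
        have h2 := Set.ncard_insert_le x2 ({x3} : Set (Fin n × Fin n))
        simp only [Set.ncard_singleton] at h2
        omega
      have h4' : ((ddGraph ({A, B} : Set (Matrix (Fin n) (Fin n) ℝ))).neighborSet (i, j)).ncard
          = 4 := h4
      omega
    have hr : ∃ jr : Fin n, (j : ℕ) + 1 = (jr : ℕ) ∧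
        (ddGraph ({A, B} : Set (Matrix (Fin n) (Fin n) ℝ))).Adj (i, j) (i, jr) := by
      by_contra hc
      push_neg at hc
      obtain ⟨p1, hp1v⟩ : ∃ p : Fin n, (p : ℕ) = (j : ℕ) - 1 :=
        ⟨⟨(j : ℕ) - 1, lt_of_le_of_lt (Nat.sub_le _ _) j.is_lt⟩, rfl⟩
      obtain ⟨q1, hq1v⟩ : ∃ q : Fin n, (q : ℕ) = (i : ℕ) - 1 :=
        ⟨⟨(i : ℕ) - 1, lt_of_le_of_lt (Nat.sub_le _ _) i.is_lt⟩, rfl⟩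
      obtain ⟨q2, hq2v⟩ : ∃ q : Fin n, (q : ℕ) = ((i : ℕ) + 1) % n :=
        ⟨⟨((i : ℕ) + 1) % n, Nat.mod_lt _ hn0⟩, rfl⟩
      refine hb3 (i, p1) (q1, j) (q2, j) ?_
      rintro ⟨wi, wj⟩ hw
      have hadj : (ddGraph ({A, B} : Set (Matrix (Fin n) (Fin n) ℝ))).Adj (i, j) (wi, wj) := hw
      simp only [Set.mem_insert_iff, Set.mem_singleton_iff]
      rcases hadj with ⟨h1, h2, -⟩ | ⟨h1, h2, -⟩
      · have h1' : i = wi := h1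
        subst h1'
        have h2' : (j : ℕ) + 1 = (wj : ℕ) ∨ (wj : ℕ) + 1 = (j : ℕ) := h2
        rcases h2' with h2' | h2'
        · exact absurd hw (hc wj h2')
        · left
          have hwj : wj = p1 := Fin.ext (by omega)
          rw [hwj]
      · have h1' : j = wj := h1
        subst h1'
        have h2' : (i : ℕ) + 1 = (wi : ℕ) ∨ (wi : ℕ) + 1 = (i : ℕ) := h2
        rcases h2' with h2' | h2'
        · right; right
          have hwlt := wi.is_lt
          have hwi : wi = q2 := Fin.ext (by rw [hq2v, Nat.mod_eq_of_lt (by omega)]; omega)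
          rw [hwi]
        · right; left
          have hwi : wi = q1 := Fin.ext (by omega)
          rw [hwi]
    have hl : ∃ jl : Fin n, (jl : ℕ) + 1 = (j : ℕ) ∧
        (ddGraph ({A, B} : Set (Matrix (Fin n) (Fin n) ℝ))).Adj (i, j) (i, jl) := by
      by_contra hc
      push_neg at hc
      obtain ⟨p2, hp2v⟩ : ∃ p : Fin n, (p : ℕ) = ((j : ℕ) + 1) % n :=
        ⟨⟨((j : ℕ) + 1) % n, Nat.mod_lt _ hn0⟩, rfl⟩
      obtain ⟨q1, hq1v⟩ : ∃ q : Fin n, (q : ℕ) = (i : ℕ) - 1 :=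
        ⟨⟨(i : ℕ) - 1, lt_of_le_of_lt (Nat.sub_le _ _) i.is_lt⟩, rfl⟩
      obtain ⟨q2, hq2v⟩ : ∃ q : Fin n, (q : ℕ) = ((i : ℕ) + 1) % n :=
        ⟨⟨((i : ℕ) + 1) % n, Nat.mod_lt _ hn0⟩, rfl⟩
      refine hb3 (i, p2) (q1, j) (q2, j) ?_
      rintro ⟨wi, wj⟩ hw
      have hadj : (ddGraph ({A, B} : Set (Matrix (Fin n) (Fin n) ℝ))).Adj (i, j) (wi, wj) := hw
      simp only [Set.mem_insert_iff, Set.mem_singleton_iff]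
      rcases hadj with ⟨h1, h2, -⟩ | ⟨h1, h2, -⟩
      · have h1' : i = wi := h1
        subst h1'
        have h2' : (j : ℕ) + 1 = (wj : ℕ) ∨ (wj : ℕ) + 1 = (j : ℕ) := h2
        rcases h2' with h2' | h2'
        · left
          have hwlt := wj.is_lt
          have hwj : wj = p2 := Fin.ext (by rw [hp2v, Nat.mod_eq_of_lt (by omega)]; omega)
          rw [hwj]
        · exact absurd hw (hc wj h2')
      · have h1' : j = wj := h1
        subst h1'
        have h2' : (i : ℕ) + 1 = (wi : ℕ) ∨ (wi : ℕ) + 1 = (i : ℕ) := h2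
        rcases h2' with h2' | h2'
        · right; right
          have hwlt := wi.is_lt
          have hwi : wi = q2 := Fin.ext (by rw [hq2v, Nat.mod_eq_of_lt (by omega)]; omega)
          rw [hwi]
        · right; left
          have hwi : wi = q1 := Fin.ext (by omega)
          rw [hwi]
    obtain ⟨jr, hjr, hadjr⟩ := hr
    obtain ⟨jl, hjl, hadjl⟩ := hl
    have hrj : rowPartial A i j ≠ rowPartial B i j := by
      rcases hadjr with ⟨-, -, A', hA', B', hB', hne⟩ | ⟨habs, -, -⟩
      · have hne' : rowPartial A' i (min j jr) ≠ rowPartial B' i (min j jr) := hne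
        rw [min_eq_left (show j ≤ jr by rw [Fin.le_def]; omega)] at hne'
        simp only [Set.mem_insert_iff, Set.mem_singleton_iff] at hA' hB'
        rcases hA' with rfl | rfl <;> rcases hB' with rfl | rfl
        · exact absurd rfl hne'
        · exact hne'
        · exact hne'.symm
        · exact absurd rfl hne'
      · exfalso
        have h : (j : ℕ) = (jr : ℕ) := congrArg Fin.val habs
        omega
    have hrl : rowPartial A i jl ≠ rowPartial B i jl := by
      rcases hadjl with ⟨-, -, A', hA', B', hB', hne⟩ | ⟨habs, -, -⟩
      · have hne' : rowPartial A' i (min j jl) ≠ rowPartial B' i (min j jl) := hne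
        rw [min_eq_right (show jl ≤ j by rw [Fin.le_def]; omega)] at hne'
        simp only [Set.mem_insert_iff, Set.mem_singleton_iff] at hA' hB'
        rcases hA' with rfl | rfl <;> rcases hB' with rfl | rfl
        · exact absurd rfl hne'
        · exact hne'
        · exact hne'.symm
        · exact absurd rfl hne'
      · exfalso
        have h : (j : ℕ) = (jl : ℕ) := congrArg Fin.val habs
        omega
    have ha : A i j = rowPartial A i j - rowPartial A i jl := by
      have := rowPartial_step A i j jl hjl
      linarith
    have hb : B i j = rowPartial B i j - rowPartial B i jl := by
      have := rowPartial_step B i j jl hjl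
      linarith
    rcases hArow i j with h1 | h1 <;> rcases hArow i jl with h2 | h2 <;>
      rcases hBrow i j with h3 | h3 <;> rcases hBrow i jl with h4 | h4 <;>
      rw [h1, h3] at hrj <;> rw [h2, h4] at hrl <;>
      first
        | exact absurd rfl hrj
        | exact absurd rfl hrl
        | (rw [ha, hb, h1, h2, h3, h4]; norm_num)
end ASMPaper
end

section
/- If every vertex of the doubly directed graph G(F) of a face F of ASM_n has even degree, then for each vertex (ASM) A of F there is a unique vertex B of F such that no proper face of F contains both A and B; B is obtained by reversing all arcs of the simple flow grid of A that correspond to edges of G(F). If G(F) has a vertex of odd degree, then no two vertices of F are estranged in F. -/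
open scoped BigOperators
open scoped Classical

namespace ASMPaper

variable {n : ℕ}

section PartialAPI

/-- Strict partial row sum. -/
def rowPartialLt (A : Matrix (Fin n) (Fin n) ℝ) (i j : Fin n) : ℝ :=
  ∑ j' ∈ Finset.univ.filter (fun j' : Fin n => j' < j), A i j'

/-- Strict partial column sum. -/
def colPartialLt (A : Matrix (Fin n) (Fin n) ℝ) (i j : Fin n) : ℝ :=
  ∑ i' ∈ Finset.univ.filter (fun i' : Fin n => i' < i), A i' j

lemma rowPartial_split_s9 (A : Matrix (Fin n) (Fin n) ℝ) (i j : Fin n) :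
    rowPartial A i j = rowPartialLt A i j + A i j := by
  have h : Finset.univ.filter (fun j' : Fin n => j' ≤ j) =
      insert j (Finset.univ.filter (fun j' : Fin n => j' < j)) := by
    ext x
    simp only [Finset.mem_filter, Finset.mem_univ, true_and, Finset.mem_insert]
    rw [Fin.le_def, Fin.lt_def, Fin.ext_iff]
    omega
  rw [rowPartial, h, Finset.sum_insert (by simp), rowPartialLt]
  ring

lemma colPartial_split (A : Matrix (Fin n) (Fin n) ℝ) (i j : Fin n) :
    colPartial A i j = colPartialLt A i j + A i j := by
  have h : Finset.univ.filter (fun i' : Fin n => i' ≤ i) =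
      insert i (Finset.univ.filter (fun i' : Fin n => i' < i)) := by
    ext x
    simp only [Finset.mem_filter, Finset.mem_univ, true_and, Finset.mem_insert]
    rw [Fin.le_def, Fin.lt_def, Fin.ext_iff]
    omega
  rw [colPartial, h, Finset.sum_insert (by simp), colPartialLt]
  ring

lemma rowPartialLt_zero (A : Matrix (Fin n) (Fin n) ℝ) (i : Fin n) {j : Fin n}
    (hj : (j : ℕ) = 0) : rowPartialLt A i j = 0 := by
  rw [rowPartialLt]
  have : Finset.univ.filter (fun j' : Fin n => j' < j) = ∅ := by
    ext x
    simp only [Finset.mem_filter, Finset.mem_univ, true_and, Finset.notMem_empty, iff_false]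
    rw [Fin.lt_def]; omega
  rw [this, Finset.sum_empty]

lemma colPartialLt_zero (A : Matrix (Fin n) (Fin n) ℝ) (j : Fin n) {i : Fin n}
    (hi : (i : ℕ) = 0) : colPartialLt A i j = 0 := by
  rw [colPartialLt]
  have : Finset.univ.filter (fun i' : Fin n => i' < i) = ∅ := by
    ext x
    simp only [Finset.mem_filter, Finset.mem_univ, true_and, Finset.notMem_empty, iff_false]
    rw [Fin.lt_def]; omega
  rw [this, Finset.sum_empty]

lemma rowPartialLt_eq_prev (A : Matrix (Fin n) (Fin n) ℝ) (i : Fin n) {j j' : Fin n}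
    (h : (j' : ℕ) + 1 = (j : ℕ)) : rowPartialLt A i j = rowPartial A i j' := by
  rw [rowPartialLt, rowPartial]
  congr 1
  ext x
  simp only [Finset.mem_filter, Finset.mem_univ, true_and]
  rw [Fin.lt_def, Fin.le_def]; omega

lemma colPartialLt_eq_prev (A : Matrix (Fin n) (Fin n) ℝ) (j : Fin n) {i i' : Fin n}
    (h : (i' : ℕ) + 1 = (i : ℕ)) : colPartialLt A i j = colPartial A i' j := by
  rw [colPartialLt, colPartial]
  congr 1
  ext x
  simp only [Finset.mem_filter, Finset.mem_univ, true_and]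
  rw [Fin.lt_def, Fin.le_def]; omega

lemma rowPartial_eq_sum (A : Matrix (Fin n) (Fin n) ℝ) (i : Fin n) {j : Fin n}
    (hj : (j : ℕ) + 1 = n) : rowPartial A i j = ∑ j', A i j' := by
  rw [rowPartial]
  congr 1
  ext x
  simp only [Finset.mem_filter, Finset.mem_univ, true_and, iff_true]
  rw [Fin.le_def]
  have := x.isLt
  omega

lemma colPartial_eq_sum (A : Matrix (Fin n) (Fin n) ℝ) (j : Fin n) {i : Fin n}
    (hi : (i : ℕ) + 1 = n) : colPartial A i j = ∑ i', A i' j := by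
  rw [colPartial]
  congr 1
  ext x
  simp only [Finset.mem_filter, Finset.mem_univ, true_and, iff_true]
  rw [Fin.le_def]
  have := x.isLt
  omega

/-- conservation at a grid vertex -/
lemma conservation (A : Matrix (Fin n) (Fin n) ℝ) (i j : Fin n) :
    rowPartial A i j - rowPartialLt A i j = colPartial A i j - colPartialLt A i j := by
  rw [rowPartial_split_s9, colPartial_split]; ring

lemma rowPartial_add (A B : Matrix (Fin n) (Fin n) ℝ) (i j : Fin n) :
    rowPartial (A + B) i j = rowPartial A i j + rowPartial B i j := by
  simp [rowPartial, Matrix.add_apply, Finset.sum_add_distrib]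

lemma rowPartial_sub (A B : Matrix (Fin n) (Fin n) ℝ) (i j : Fin n) :
    rowPartial (A - B) i j = rowPartial A i j - rowPartial B i j := by
  simp [rowPartial, Matrix.sub_apply, Finset.sum_sub_distrib]

lemma rowPartial_smul (c : ℝ) (A : Matrix (Fin n) (Fin n) ℝ) (i j : Fin n) :
    rowPartial (c • A) i j = c * rowPartial A i j := by
  simp [rowPartial, Matrix.smul_apply, Finset.mul_sum, smul_eq_mul]

lemma colPartial_add (A B : Matrix (Fin n) (Fin n) ℝ) (i j : Fin n) :
    colPartial (A + B) i j = colPartial A i j + colPartial B i j := by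
  simp [colPartial, Matrix.add_apply, Finset.sum_add_distrib]

lemma colPartial_sub (A B : Matrix (Fin n) (Fin n) ℝ) (i j : Fin n) :
    colPartial (A - B) i j = colPartial A i j - colPartial B i j := by
  simp [colPartial, Matrix.sub_apply, Finset.sum_sub_distrib]

lemma colPartial_smul (c : ℝ) (A : Matrix (Fin n) (Fin n) ℝ) (i j : Fin n) :
    colPartial (c • A) i j = c * colPartial A i j := by
  simp [colPartial, Matrix.smul_apply, Finset.mul_sum, smul_eq_mul]

lemma rowPartial_sum {ι : Type*} (s : Finset ι) (f : ι → Matrix (Fin n) (Fin n) ℝ)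
    (i j : Fin n) : rowPartial (∑ c ∈ s, f c) i j = ∑ c ∈ s, rowPartial (f c) i j := by
  classical
  induction s using Finset.induction_on with
  | empty => simp [rowPartial]
  | insert _ _ h ih => rw [Finset.sum_insert h, rowPartial_add, ih,
      Finset.sum_insert h]

lemma colPartial_sum {ι : Type*} (s : Finset ι) (f : ι → Matrix (Fin n) (Fin n) ℝ)
    (i j : Fin n) : colPartial (∑ c ∈ s, f c) i j = ∑ c ∈ s, colPartial (f c) i j := by
  classical
  induction s using Finset.induction_on with
  | empty => simp [colPartial]
  | insert _ _ h ih => rw [Finset.sum_insert h, colPartial_add, ih,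
      Finset.sum_insert h]

/-- matrices are determined by their partial row sums -/
lemma ext_of_rowPartial {A B : Matrix (Fin n) (Fin n) ℝ}
    (h : ∀ i j, rowPartial A i j = rowPartial B i j) : A = B := by
  funext i j
  have h2 : rowPartialLt A i j = rowPartialLt B i j := by
    rcases Nat.eq_zero_or_pos (j : ℕ) with hj | hj
    · rw [rowPartialLt_zero _ _ hj, rowPartialLt_zero _ _ hj]
    · have hlt : (j : ℕ) - 1 < n := by have := j.isLt; omega
      rw [rowPartialLt_eq_prev A i (j' := ⟨(j : ℕ) - 1, hlt⟩) (by simp; omega),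
        rowPartialLt_eq_prev B i (j' := ⟨(j : ℕ) - 1, hlt⟩) (by simp; omega), h]
  have := rowPartial_split_s9 A i j
  have := rowPartial_split_s9 B i j
  have := h i j
  linarith

end PartialAPI
section HPolytope

/-- The inequality description of the ASM polytope. -/
def HP (n : ℕ) : Set (Matrix (Fin n) (Fin n) ℝ) :=
  {X | (∀ i j, 0 ≤ rowPartial X i j ∧ rowPartial X i j ≤ 1) ∧
       (∀ i j, 0 ≤ colPartial X i j ∧ colPartial X i j ≤ 1) ∧
       (∀ i, ∑ j, X i j = 1) ∧ (∀ j, ∑ i, X i j = 1)}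

lemma IsASM.mem_HP {A : Matrix (Fin n) (Fin n) ℝ} (hA : IsASM A) : A ∈ HP n := by
  obtain ⟨-, hr, hc, hs1, hs2⟩ := hA
  refine ⟨fun i j => ?_, fun i j => ?_, hs1, hs2⟩
  · rcases hr i j with h | h <;> rw [h] <;> norm_num
  · rcases hc i j with h | h <;> rw [h] <;> norm_num

lemma convex_HP : Convex ℝ (HP n) := by
  rintro X hX Y hY a b ha hb hab
  obtain ⟨hr, hc, h1, h2⟩ := hX
  obtain ⟨hr', hc', h1', h2'⟩ := hY
  have key : ∀ i j, rowPartial (a • X + b • Y) i j = a * rowPartial X i j + b * rowPartial Y i j :=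
    fun i j => by rw [rowPartial_add, rowPartial_smul, rowPartial_smul]
  have keyc : ∀ i j, colPartial (a • X + b • Y) i j = a * colPartial X i j + b * colPartial Y i j :=
    fun i j => by rw [colPartial_add, colPartial_smul, colPartial_smul]
  refine ⟨fun i j => ?_, fun i j => ?_, fun i => ?_, fun j => ?_⟩
  · rw [key]
    constructor
    · have := (hr i j).1; have := (hr' i j).1; positivity
    · nlinarith [(hr i j).2, (hr' i j).2]
  · rw [keyc]
    constructor
    · have := (hc i j).1; have := (hc' i j).1; positivity
    · nlinarith [(hc i j).2, (hc' i j).2]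
  · simp only [Matrix.add_apply, Matrix.smul_apply, smul_eq_mul, Finset.sum_add_distrib,
      ← Finset.mul_sum, h1 i, h1' i]
    linarith
  · simp only [Matrix.add_apply, Matrix.smul_apply, smul_eq_mul, Finset.sum_add_distrib,
      ← Finset.mul_sum, h2 j, h2' j]
    linarith

lemma ASMPolytope_subset_HP : ASMPolytope n ⊆ HP n :=
  convexHull_min (fun A hA => hA.mem_HP) convex_HP

lemma rowPartial_last_of_HP {X : Matrix (Fin n) (Fin n) ℝ} (hX : X ∈ HP n) (i : Fin n)
    {j : Fin n} (hj : (j : ℕ) + 1 = n) : rowPartial X i j = 1 := by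
  rw [rowPartial_eq_sum X i hj]; exact hX.2.2.1 i

lemma colPartial_last_of_HP {X : Matrix (Fin n) (Fin n) ℝ} (hX : X ∈ HP n) (j : Fin n)
    {i : Fin n} (hi : (i : ℕ) + 1 = n) : colPartial X i j = 1 := by
  rw [colPartial_eq_sum X j hi]; exact hX.2.2.2 j

lemma rowPartialLt_mem {A : Matrix (Fin n) (Fin n) ℝ}
    (hr : ∀ i j, rowPartial A i j = 0 ∨ rowPartial A i j = 1) (i j : Fin n) :
    rowPartialLt A i j = 0 ∨ rowPartialLt A i j = 1 := by
  rcases Nat.eq_zero_or_pos (j : ℕ) with hj | hj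
  · exact Or.inl (rowPartialLt_zero _ _ hj)
  · have hlt : (j : ℕ) - 1 < n := by have := j.isLt; omega
    rw [rowPartialLt_eq_prev A i (j' := ⟨(j : ℕ) - 1, hlt⟩) (by simp; omega)]
    exact hr i _

lemma colPartialLt_mem {A : Matrix (Fin n) (Fin n) ℝ}
    (hc : ∀ i j, colPartial A i j = 0 ∨ colPartial A i j = 1) (i j : Fin n) :
    colPartialLt A i j = 0 ∨ colPartialLt A i j = 1 := by
  rcases Nat.eq_zero_or_pos (i : ℕ) with hi | hi
  · exact Or.inl (colPartialLt_zero _ _ hi)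
  · have hlt : (i : ℕ) - 1 < n := by have := i.isLt; omega
    rw [colPartialLt_eq_prev A j (i' := ⟨(i : ℕ) - 1, hlt⟩) (by simp; omega)]
    exact hc _ j

/-- a matrix whose partial sums are all 0/1 and whose rows and columns sum to 1 is an ASM -/
lemma isASM_of_partials {A : Matrix (Fin n) (Fin n) ℝ}
    (hr : ∀ i j, rowPartial A i j = 0 ∨ rowPartial A i j = 1)
    (hc : ∀ i j, colPartial A i j = 0 ∨ colPartial A i j = 1)
    (h1 : ∀ i, ∑ j, A i j = 1) (h2 : ∀ j, ∑ i, A i j = 1) : IsASM A := by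
  refine ⟨fun i j => ?_, hr, hc, h1, h2⟩
  have hs := rowPartial_split_s9 A i j
  rcases hr i j with h | h <;> rcases rowPartialLt_mem hr i j with h' | h' <;>
    rw [h] at hs <;> rw [h'] at hs <;> [left; (right; right); (right; left); left] <;> linarith

/-- The set of ASMs is finite. -/
lemma finite_setOf_isASM : {A : Matrix (Fin n) (Fin n) ℝ | IsASM A}.Finite := by
  have h : {A : Matrix (Fin n) (Fin n) ℝ | IsASM A} ⊆
      (fun f : Fin n → Fin n → ℝ => f) ''
        (Set.pi Set.univ fun _ : Fin n => Set.pi Set.univ fun _ : Fin n =>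
          ({0, 1, -1} : Set ℝ)) := by
    intro A hA
    refine ⟨A, fun i _ j _ => ?_, rfl⟩
    rcases hA.1 i j with h | h | h <;> simp [h]
  exact Set.Finite.subset (Set.Finite.image _ (Set.Finite.pi fun _ =>
    Set.Finite.pi fun _ => (by norm_num : ({0,1,-1} : Set ℝ).Finite))) h

end HPolytope
section Hull

/-- Positions of the grid: row positions and column positions. -/
abbrev Pos (n : ℕ) := (Fin n × Fin n) ⊕ (Fin n × Fin n)

/-- The vector of all partial sums of a matrix. -/
noncomputable def pval (X : Matrix (Fin n) (Fin n) ℝ) : Pos n → ℝ :=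
  Sum.elim (fun q => rowPartial X q.1 q.2) (fun q => colPartial X q.1 q.2)

/-- predecessor in `Fin n` (0 at 0) -/
def fpred (j : Fin n) : Fin n := ⟨(j : ℕ) - 1, by have := j.isLt; omega⟩

noncomputable def prevR (val : Pos n → ℝ) (v : Fin n × Fin n) : ℝ :=
  if 0 < (v.2 : ℕ) then val (Sum.inl (v.1, fpred v.2)) else 0

noncomputable def prevC (val : Pos n → ℝ) (v : Fin n × Fin n) : ℝ :=
  if 0 < (v.1 : ℕ) then val (Sum.inr (fpred v.1, v.2)) else 0

/-- conservation functional at a grid vertex -/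
noncomputable def Phi (val : Pos n → ℝ) (v : Fin n × Fin n) : ℝ :=
  val (Sum.inl v) - prevR val v - (val (Sum.inr v) - prevC val v)

lemma prevR_pval (X : Matrix (Fin n) (Fin n) ℝ) (v : Fin n × Fin n) :
    prevR (pval X) v = rowPartialLt X v.1 v.2 := by
  rw [prevR]
  split
  · rename_i h
    exact (rowPartialLt_eq_prev X v.1 (j' := fpred v.2) (by simp [fpred]; omega)).symm
  · rename_i h
    rw [rowPartialLt_zero _ _ (by omega)]

lemma prevC_pval (X : Matrix (Fin n) (Fin n) ℝ) (v : Fin n × Fin n) :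
    prevC (pval X) v = colPartialLt X v.1 v.2 := by
  rw [prevC]
  split
  · rename_i h
    exact (colPartialLt_eq_prev X v.2 (i' := fpred v.1) (by simp [fpred]; omega)).symm
  · rename_i h
    rw [colPartialLt_zero _ _ (by omega)]

lemma Phi_pval (X : Matrix (Fin n) (Fin n) ℝ) (v : Fin n × Fin n) : Phi (pval X) v = 0 := by
  rw [Phi, prevR_pval, prevC_pval]
  have := conservation X v.1 v.2
  simp only [pval, Sum.elim_inl, Sum.elim_inr]
  linarith

/-- reconstruct a matrix from a conservative position-vector -/
noncomputable def Ymat (val : Pos n → ℝ) : Matrix (Fin n) (Fin n) ℝ :=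
  fun i j => val (Sum.inl (i, j)) - prevR val (i, j)

lemma rowPartial_Ymat (val : Pos n → ℝ) (i : Fin n) :
    ∀ j, rowPartial (Ymat val) i j = val (Sum.inl (i, j)) := by
  suffices H : ∀ (k : ℕ) (j : Fin n), (j : ℕ) = k → rowPartial (Ymat val) i j = val (Sum.inl (i, j)) by
    exact fun j => H (j : ℕ) j rfl
  intro k
  induction k using Nat.strong_induction_on with
  | _ k ih =>
    intro j hk
    have hlt : rowPartialLt (Ymat val) i j = prevR val (i, j) := by
      rcases Nat.eq_zero_or_pos (j : ℕ) with h0 | h0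
      · rw [rowPartialLt_zero _ _ h0, prevR, if_neg (by simp; omega)]
      · have hprev : ((fpred j : Fin n) : ℕ) + 1 = (j : ℕ) := by simp [fpred]; omega
        rw [rowPartialLt_eq_prev _ _ hprev, ih _ (by simp [fpred]; omega) _ rfl,
          prevR, if_pos (by simpa using h0)]
    have := rowPartial_split_s9 (Ymat val) i j
    rw [this, hlt, Ymat]
    ring

lemma colPartial_Ymat (val : Pos n → ℝ) (hcons : ∀ v, Phi val v = 0) (j : Fin n) :
    ∀ i, colPartial (Ymat val) i j = val (Sum.inr (i, j)) := by
  suffices H : ∀ (k : ℕ) (i : Fin n), (i : ℕ) = k → colPartial (Ymat val) i j = val (Sum.inr (i, j)) by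
    exact fun i => H (i : ℕ) i rfl
  intro k
  induction k using Nat.strong_induction_on with
  | _ k ih =>
    intro i hk
    have hlt : colPartialLt (Ymat val) i j = prevC val (i, j) := by
      rcases Nat.eq_zero_or_pos (i : ℕ) with h0 | h0
      · rw [colPartialLt_zero _ _ h0, prevC, if_neg (by simp; omega)]
      · have hprev : ((fpred i : Fin n) : ℕ) + 1 = (i : ℕ) := by simp [fpred]; omega
        rw [colPartialLt_eq_prev _ _ hprev, ih _ (by simp [fpred]; omega) _ rfl,
          prevC, if_pos (by simpa using h0)]
    have hsplit := colPartial_split (Ymat val) i j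
    have hc := hcons (i, j)
    rw [Phi] at hc
    rw [hsplit, hlt, Ymat]
    linarith

lemma pval_Ymat (val : Pos n → ℝ) (hcons : ∀ v, Phi val v = 0) (p : Pos n) :
    pval (Ymat val) p = val p := by
  rcases p with q | q
  · simpa [pval] using rowPartial_Ymat val q.1 q.2
  · simpa [pval] using colPartial_Ymat val hcons q.2 q.1

lemma pval_add (X Y : Matrix (Fin n) (Fin n) ℝ) (p : Pos n) :
    pval (X + Y) p = pval X p + pval Y p := by
  rcases p with q | q <;> simp [pval, rowPartial_add, colPartial_add]

lemma pval_smul (c : ℝ) (X : Matrix (Fin n) (Fin n) ℝ) (p : Pos n) :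
    pval (c • X) p = c * pval X p := by
  rcases p with q | q <;> simp [pval, rowPartial_smul, colPartial_smul]

/-- shifting sums over `Fin n` -/
lemma sum_shift {M : Type*} [AddCommMonoid M] {g : Fin n → M}
    (hg : ∀ j : Fin n, (j : ℕ) + 1 = n → g j = 0) :
    ∑ j : Fin n, (if 0 < (j : ℕ) then g (fpred j) else 0) = ∑ j : Fin n, g j := by
  rcases Nat.eq_zero_or_pos n with h0 | h0
  · subst h0; simp
  obtain ⟨m, rfl⟩ : ∃ m, n = m + 1 := ⟨n - 1, by omega⟩
  classical
  set f : ℕ → M := fun k => if h : k < m + 1 then g ⟨k, h⟩ else 0 with hf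
  have h1 : ∀ j : Fin (m + 1), (if 0 < (j : ℕ) then g (fpred j) else 0)
      = (if 0 < (j : ℕ) then f ((j : ℕ) - 1) else 0) := by
    intro j
    by_cases h : 0 < (j : ℕ)
    · rw [if_pos h, if_pos h, hf]
      have hlt : (j : ℕ) - 1 < m + 1 := by omega
      simp only [dif_pos hlt]
      rfl
    · rw [if_neg h, if_neg h]
  have h2 : ∀ j : Fin (m + 1), g j = f (j : ℕ) := by
    intro j; rw [hf]; simp only [j.isLt, dif_pos]
  calc ∑ j : Fin (m+1), (if 0 < (j : ℕ) then g (fpred j) else 0)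
      = ∑ j : Fin (m+1), (if 0 < (j : ℕ) then f ((j : ℕ) - 1) else 0) :=
        Finset.sum_congr rfl fun j _ => h1 j
    _ = ∑ k ∈ Finset.range (m+1), (if 0 < k then f (k - 1) else 0) :=
        Fin.sum_univ_eq_sum_range (fun k => if 0 < k then f (k - 1) else 0) (m+1)
    _ = ∑ k ∈ Finset.range m, f k := by
        rw [Finset.sum_range_succ']
        simp
    _ = ∑ k ∈ Finset.range (m+1), f k := by
        rw [Finset.sum_range_succ]
        have : f m = 0 := by
          rw [hf]; simp only [Nat.lt_succ_self, dif_pos]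
          exact hg ⟨m, Nat.lt_succ_self m⟩ rfl
        rw [this, add_zero]
    _ = ∑ j : Fin (m+1), f (j : ℕ) := (Fin.sum_univ_eq_sum_range (fun k => f k) (m+1)).symm
    _ = ∑ j : Fin (m+1), g j := Finset.sum_congr rfl fun j _ => (h2 j).symm

/-- total conservation: the sum of `Phi` over all vertices vanishes for position vectors
vanishing on last positions -/
lemma sum_Phi_eq_zero (val : Pos n → ℝ)
    (hr : ∀ i j : Fin n, (j : ℕ) + 1 = n → val (Sum.inl (i, j)) = 0)
    (hc : ∀ i j : Fin n, (i : ℕ) + 1 = n → val (Sum.inr (i, j)) = 0) :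
    ∑ v : Fin n × Fin n, Phi val v = 0 := by
  have hb : ∑ v : Fin n × Fin n, prevR val v = ∑ v : Fin n × Fin n, val (Sum.inl v) := by
    rw [Fintype.sum_prod_type, Fintype.sum_prod_type]
    refine Finset.sum_congr rfl fun i _ => ?_
    simpa [prevR] using sum_shift (g := fun j => val (Sum.inl (i, j))) (fun j hj => hr i j hj)
  have hd : ∑ v : Fin n × Fin n, prevC val v = ∑ v : Fin n × Fin n, val (Sum.inr v) := by
    rw [Fintype.sum_prod_type_right, Fintype.sum_prod_type_right]
    refine Finset.sum_congr rfl fun j _ => ?_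
    simpa [prevC] using sum_shift (g := fun i => val (Sum.inr (i, j))) (fun i hi => hc i j hi)
  simp only [Phi]
  rw [Finset.sum_sub_distrib, Finset.sum_sub_distrib, Finset.sum_sub_distrib, hb, hd]
  ring

end Hull
section Kernel

/-- strictly fractional value -/
def IsFrac (x : ℝ) : Prop := x ≠ 0 ∧ x ≠ 1

lemma not_isFrac {x : ℝ} (h : ¬ IsFrac x) : x = 0 ∨ x = 1 := by
  by_contra hc
  push_neg at hc
  exact h ⟨hc.1, hc.2⟩

lemma isFrac_bounds {x : ℝ} (h : IsFrac x) (h0 : 0 ≤ x) (h1 : x ≤ 1) : 0 < x ∧ x < 1 :=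
  ⟨lt_of_le_of_ne h0 (Ne.symm h.1), lt_of_le_of_ne h1 h.2⟩

/-- The set of fractional positions of a matrix. -/
noncomputable def Frac (X : Matrix (Fin n) (Fin n) ℝ) : Finset (Pos n) :=
  Finset.univ.filter (fun p => IsFrac (pval X p))

lemma mem_Frac {X : Matrix (Fin n) (Fin n) ℝ} {p : Pos n} :
    p ∈ Frac X ↔ IsFrac (pval X p) := by simp [Frac]

lemma lastRow_not_mem_Frac {X : Matrix (Fin n) (Fin n) ℝ} (hX : X ∈ HP n) (i : Fin n)
    {j : Fin n} (hj : (j : ℕ) + 1 = n) : Sum.inl (i, j) ∉ Frac X := by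
  simp only [mem_Frac, pval, Sum.elim_inl]
  rw [rowPartial_last_of_HP hX i hj]
  simp [IsFrac]

lemma lastCol_not_mem_Frac {X : Matrix (Fin n) (Fin n) ℝ} (hX : X ∈ HP n) (j : Fin n)
    {i : Fin n} (hi : (i : ℕ) + 1 = n) : Sum.inr (i, j) ∉ Frac X := by
  simp only [mem_Frac, pval, Sum.elim_inr]
  rw [colPartial_last_of_HP hX j hi]
  simp [IsFrac]

/-- at least two of the four incident values at a vertex are fractional, if one is -/
lemma two_le_frac_count {t1 t2 t3 t4 : ℝ}
    (h1 : 0 ≤ t1 ∧ t1 ≤ 1) (h2 : 0 ≤ t2 ∧ t2 ≤ 1) (h3 : 0 ≤ t3 ∧ t3 ≤ 1)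
    (h4 : 0 ≤ t4 ∧ t4 ≤ 1) (heq : t1 - t2 - (t3 - t4) = 0)
    (hex : IsFrac t1 ∨ IsFrac t2 ∨ IsFrac t3 ∨ IsFrac t4) :
    2 ≤ (if IsFrac t1 then 1 else 0) + (if IsFrac t2 then 1 else 0)
      + (if IsFrac t3 then 1 else 0) + (if IsFrac t4 then 1 else 0) := by
  by_contra hcon
  push_neg at hcon
  by_cases f1 : IsFrac t1 <;> by_cases f2 : IsFrac t2 <;>
    by_cases f3 : IsFrac t3 <;> by_cases f4 : IsFrac t4 <;>
    simp only [f1, f2, f3, f4, if_true, if_false, ite_true, ite_false] at hcon hex <;>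
    try omega
  -- the remaining cases: exactly one fractional, or none
  · -- f1 only
    obtain ⟨hb1, hb2⟩ := isFrac_bounds f1 h1.1 h1.2
    rcases not_isFrac f2 with e2 | e2 <;> rcases not_isFrac f3 with e3 | e3 <;>
      rcases not_isFrac f4 with e4 | e4 <;> linarith
  · -- f2 only
    obtain ⟨hb1, hb2⟩ := isFrac_bounds f2 h2.1 h2.2
    rcases not_isFrac f1 with e1 | e1 <;> rcases not_isFrac f3 with e3 | e3 <;>
      rcases not_isFrac f4 with e4 | e4 <;> linarith
  · -- f3 only
    obtain ⟨hb1, hb2⟩ := isFrac_bounds f3 h3.1 h3.2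
    rcases not_isFrac f1 with e1 | e1 <;> rcases not_isFrac f2 with e2 | e2 <;>
      rcases not_isFrac f4 with e4 | e4 <;> linarith
  · -- f4 only
    obtain ⟨hb1, hb2⟩ := isFrac_bounds f4 h4.1 h4.2
    rcases not_isFrac f1 with e1 | e1 <;> rcases not_isFrac f2 with e2 | e2 <;>
      rcases not_isFrac f3 with e3 | e3 <;> linarith
  · simp at hex

/-- vertices incident to a fractional position -/
noncomputable def Tver (X : Matrix (Fin n) (Fin n) ℝ) : Finset (Fin n × Fin n) :=
  Finset.univ.filter (fun v =>
    Sum.inl v ∈ Frac X ∨ (0 < (v.2 : ℕ) ∧ Sum.inl (v.1, fpred v.2) ∈ Frac X) ∨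
    Sum.inr v ∈ Frac X ∨ (0 < (v.1 : ℕ) ∧ Sum.inr (fpred v.1, v.2) ∈ Frac X))

/-- number of fractional positions incident to a vertex -/
noncomputable def Dcount (X : Matrix (Fin n) (Fin n) ℝ) (v : Fin n × Fin n) : ℕ :=
  (if Sum.inl v ∈ Frac X then 1 else 0) +
  (if 0 < (v.2 : ℕ) ∧ Sum.inl (v.1, fpred v.2) ∈ Frac X then 1 else 0) +
  (if Sum.inr v ∈ Frac X then 1 else 0) +
  (if 0 < (v.1 : ℕ) ∧ Sum.inr (fpred v.1, v.2) ∈ Frac X then 1 else 0)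

lemma two_le_Dcount {X : Matrix (Fin n) (Fin n) ℝ} (hX : X ∈ HP n) {v : Fin n × Fin n}
    (hv : v ∈ Tver X) : 2 ≤ Dcount X v := by
  rw [Tver, Finset.mem_filter] at hv
  replace hv := hv.2
  have hb2 : 0 ≤ prevR (pval X) v ∧ prevR (pval X) v ≤ 1 := by
    rw [prevR]; split
    · exact hX.1 _ _
    · norm_num
  have hb4 : 0 ≤ prevC (pval X) v ∧ prevC (pval X) v ≤ 1 := by
    rw [prevC]; split
    · exact hX.2.1 _ _
    · norm_num
  have e1 : (Sum.inl v ∈ Frac X) = IsFrac (pval X (Sum.inl v)) := propext mem_Frac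
  have e3 : (Sum.inr v ∈ Frac X) = IsFrac (pval X (Sum.inr v)) := propext mem_Frac
  have e2 : (0 < (v.2 : ℕ) ∧ Sum.inl (v.1, fpred v.2) ∈ Frac X) = IsFrac (prevR (pval X) v) := by
    apply propext
    rw [prevR]
    split
    · rename_i h; simp [h, mem_Frac]
    · rename_i h; simp [h, IsFrac]
  have e4 : (0 < (v.1 : ℕ) ∧ Sum.inr (fpred v.1, v.2) ∈ Frac X) = IsFrac (prevC (pval X) v) := by
    apply propext
    rw [prevC]
    split
    · rename_i h; simp [h, mem_Frac]
    · rename_i h; simp [h, IsFrac]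
  rw [Dcount]
  simp only [e1, e2, e3, e4]
  simp only [e1, e2, e3, e4] at hv
  exact two_le_frac_count (hX.1 v.1 v.2) hb2 (hX.2.1 v.1 v.2) hb4 (Phi_pval X v) (by tauto)

lemma sum_Dcount {X : Matrix (Fin n) (Fin n) ℝ} (hX : X ∈ HP n) :
    ∑ v : Fin n × Fin n, Dcount X v = 2 * (Frac X).card := by
  classical
  have hcard : (Frac X).card = (∑ q : Fin n × Fin n, if Sum.inl q ∈ Frac X then 1 else 0)
      + ∑ q : Fin n × Fin n, if Sum.inr q ∈ Frac X then 1 else 0 := by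
    have h0 : (Frac X).card = ∑ p : Pos n, if p ∈ Frac X then 1 else 0 := by
      rw [Finset.sum_ite_mem, Finset.univ_inter, Finset.card_eq_sum_ones]
    rw [h0, Fintype.sum_sum_type]
  have hb : ∑ v : Fin n × Fin n, (if 0 < (v.2 : ℕ) ∧ Sum.inl (v.1, fpred v.2) ∈ Frac X then 1 else 0)
      = ∑ v : Fin n × Fin n, (if Sum.inl v ∈ Frac X then (1:ℕ) else 0) := by
    rw [Fintype.sum_prod_type, Fintype.sum_prod_type]
    refine Finset.sum_congr rfl fun i _ => ?_
    have hs := sum_shift (g := fun j : Fin n => if Sum.inl (i, j) ∈ Frac X then (1:ℕ) else 0)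
      (fun j hj => by simp [lastRow_not_mem_Frac hX i hj])
    rw [← hs]
    exact Finset.sum_congr rfl fun j _ => by rw [ite_and]
  have hd : ∑ v : Fin n × Fin n, (if 0 < (v.1 : ℕ) ∧ Sum.inr (fpred v.1, v.2) ∈ Frac X then 1 else 0)
      = ∑ v : Fin n × Fin n, (if Sum.inr v ∈ Frac X then (1:ℕ) else 0) := by
    rw [Fintype.sum_prod_type_right, Fintype.sum_prod_type_right]
    refine Finset.sum_congr rfl fun j _ => ?_
    have hs := sum_shift (g := fun i : Fin n => if Sum.inr (i, j) ∈ Frac X then (1:ℕ) else 0)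
      (fun i hi => by simp [lastCol_not_mem_Frac hX j hi])
    rw [← hs]
    exact Finset.sum_congr rfl fun i _ => by rw [ite_and]
  simp only [Dcount, Finset.sum_add_distrib]
  rw [hb, hd, hcard]
  ring

lemma Tver_card_le {X : Matrix (Fin n) (Fin n) ℝ} (hX : X ∈ HP n) :
    (Tver X).card ≤ (Frac X).card := by
  have h1 : 2 * (Tver X).card ≤ ∑ v ∈ Tver X, Dcount X v := by
    calc 2 * (Tver X).card = ∑ _v ∈ Tver X, 2 := by rw [Finset.sum_const, smul_eq_mul]; ring
      _ ≤ ∑ v ∈ Tver X, Dcount X v := Finset.sum_le_sum fun v hv => two_le_Dcount hX hv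
  have h2 : ∑ v ∈ Tver X, Dcount X v ≤ ∑ v : Fin n × Fin n, Dcount X v :=
    Finset.sum_le_sum_of_subset (Finset.subset_univ _)
  have h3 := sum_Dcount hX
  omega

lemma Phi_off_Tver {X : Matrix (Fin n) (Fin n) ℝ} (val : Pos n → ℝ)
    (hsupp : ∀ p, p ∉ Frac X → val p = 0) {v : Fin n × Fin n} (hv : v ∉ Tver X) :
    Phi val v = 0 := by
  rw [Tver, Finset.mem_filter] at hv
  push_neg at hv
  replace hv := hv (Finset.mem_univ v)
  obtain ⟨hv1, hv2, hv3, hv4⟩ := hv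
  rw [Phi, hsupp _ hv1, hsupp _ hv3, prevR, prevC]
  have e2 : (if 0 < (v.2 : ℕ) then val (Sum.inl (v.1, fpred v.2)) else 0) = 0 := by
    split
    · rename_i h; exact hsupp _ (hv2 h)
    · rfl
  have e4 : (if 0 < (v.1 : ℕ) then val (Sum.inr (fpred v.1, v.2)) else 0) = 0 := by
    split
    · rename_i h; exact hsupp _ (hv4 h)
    · rfl
  rw [e2, e4]
  ring
lemma exists_circulation {X : Matrix (Fin n) (Fin n) ℝ} (hX : X ∈ HP n)
    (hne : (Frac X).Nonempty) :
    ∃ val : Pos n → ℝ, val ≠ 0 ∧ (∀ p, p ∉ Frac X → val p = 0) ∧ ∀ v, Phi val v = 0 := by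
  classical
  -- extension by zero
  let E : (↥(Frac X) → ℝ) →ₗ[ℝ] (Pos n → ℝ) := {
    toFun := fun f p => if h : p ∈ Frac X then f ⟨p, h⟩ else 0
    map_add' := by intro f g; funext p; by_cases h : p ∈ Frac X <;> simp [h]
    map_smul' := by intro c f; funext p; by_cases h : p ∈ Frac X <;> simp [h] }
  have hEsupp : ∀ (f : ↥(Frac X) → ℝ) (p : Pos n), p ∉ Frac X → E f p = 0 := by
    intro f p hp
    show (if h : p ∈ Frac X then f ⟨p, h⟩ else 0) = 0
    rw [dif_neg hp]
  have hEmem : ∀ (f : ↥(Frac X) → ℝ) (p : Pos n) (hp : p ∈ Frac X), E f p = f ⟨p, hp⟩ := by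
    intro f p hp
    show (if h : p ∈ Frac X then f ⟨p, h⟩ else 0) = f ⟨p, hp⟩
    rw [dif_pos hp]
  -- Phi as a linear map
  let PhiL : (Pos n → ℝ) →ₗ[ℝ] ((Fin n × Fin n) → ℝ) := {
    toFun := fun val v => Phi val v
    map_add' := by
      intro u w; funext v
      simp only [Phi, prevR, prevC, Pi.add_apply]
      split_ifs <;> ring
    map_smul' := by
      intro c u; funext v
      simp only [Phi, prevR, prevC, Pi.smul_apply, smul_eq_mul, RingHom.id_apply]
      split_ifs <;> ring }
  let Psi : (↥(Frac X) → ℝ) →ₗ[ℝ] (↥(Tver X) → ℝ) :=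
    (LinearMap.funLeft ℝ ℝ (fun v : ↥(Tver X) => (v : Fin n × Fin n))).comp (PhiL.comp E)
  have hPsi_apply : ∀ (f : ↥(Frac X) → ℝ) (v : ↥(Tver X)), Psi f v = Phi (E f) (v : Fin n × Fin n) :=
    fun f v => rfl
  let sumF : (↥(Tver X) → ℝ) →ₗ[ℝ] ℝ := {
    toFun := fun g => ∑ v, g v
    map_add' := by intro f g; simp [Finset.sum_add_distrib]
    map_smul' := by intro c f; simp [Finset.mul_sum] }
  have hsumF_apply : ∀ g : ↥(Tver X) → ℝ, sumF g = ∑ v, g v := fun g => rfl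
  -- sum of Psi components is zero
  have hsum0 : ∀ f, sumF (Psi f) = 0 := by
    intro f
    have hlr : ∀ (i j : Fin n), (j : ℕ) + 1 = n → E f (Sum.inl (i, j)) = 0 :=
      fun i j hj => hEsupp f _ (lastRow_not_mem_Frac hX i hj)
    have hlc : ∀ (i j : Fin n), (i : ℕ) + 1 = n → E f (Sum.inr (i, j)) = 0 :=
      fun i j hi => hEsupp f _ (lastCol_not_mem_Frac hX j hi)
    have h1 : sumF (Psi f) = ∑ v ∈ Tver X, Phi (E f) v := by
      rw [hsumF_apply]
      rw [← Finset.sum_coe_sort (Tver X) (fun v => Phi (E f) v)]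
      rfl
    rw [h1, Finset.sum_subset (Finset.subset_univ (Tver X))
      (fun v _ hv => Phi_off_Tver (E f) (hEsupp f) hv)]
    exact sum_Phi_eq_zero (E f) hlr hlc
  -- nonemptiness of Tver
  have hTne : (Tver X).Nonempty := by
    obtain ⟨p, hp⟩ := hne
    rcases p with q | q
    · exact ⟨q, by rw [Tver, Finset.mem_filter]; exact ⟨Finset.mem_univ q, Or.inl hp⟩⟩
    · exact ⟨q, by rw [Tver, Finset.mem_filter]; exact ⟨Finset.mem_univ q, Or.inr (Or.inr (Or.inl hp))⟩⟩
  have hrange : LinearMap.range Psi ≤ LinearMap.ker sumF := by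
    rintro g ⟨f, rfl⟩
    exact hsum0 f
  have hkerF : Module.finrank ℝ (LinearMap.ker sumF) + 1 = (Tver X).card := by
    have hrn := LinearMap.finrank_range_add_finrank_ker sumF
    have hsurj : LinearMap.range sumF = ⊤ := by
      rw [LinearMap.range_eq_top]
      intro r
      obtain ⟨v0, hv0⟩ := hTne
      refine ⟨fun w => if w = (⟨v0, hv0⟩ : ↥(Tver X)) then r else 0, ?_⟩
      rw [hsumF_apply, Finset.sum_ite_eq' Finset.univ (⟨v0, hv0⟩ : ↥(Tver X)) (fun _ => r)]
      simp
    rw [hsurj, finrank_top, Module.finrank_self, Module.finrank_fintype_fun_eq_card,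
      Fintype.card_coe] at hrn
    omega
  obtain ⟨f, hfne, hfker⟩ : ∃ f : ↥(Frac X) → ℝ, f ≠ 0 ∧ Psi f = 0 := by
    have h1 := LinearMap.finrank_range_add_finrank_ker Psi
    rw [Module.finrank_fintype_fun_eq_card, Fintype.card_coe] at h1
    have h2 : Module.finrank ℝ (LinearMap.range Psi) ≤ Module.finrank ℝ (LinearMap.ker sumF) :=
      Submodule.finrank_mono hrange
    have hTcard := Tver_card_le hX
    have h3 : 0 < Module.finrank ℝ (LinearMap.ker Psi) := by omega
    rw [Module.finrank_pos_iff] at h3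
    obtain ⟨⟨g, hg⟩, hgne⟩ := exists_ne (0 : ↥(LinearMap.ker Psi))
    refine ⟨g, fun h => hgne (Subtype.ext h), hg⟩
  refine ⟨E f, ?_, hEsupp f, ?_⟩
  · intro hz
    apply hfne
    funext p
    have h := congrFun hz (p : Pos n)
    rw [Pi.zero_apply] at h
    rw [hEmem f _ p.2] at h
    simpa using h
  · intro v
    by_cases hv : v ∈ Tver X
    · have h := congrFun hfker (⟨v, hv⟩ : ↥(Tver X))
      rw [Pi.zero_apply] at h
      rw [hPsi_apply] at h
      exact h
    · exact Phi_off_Tver (E f) (hEsupp f) hv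
lemma pval_bounds {X : Matrix (Fin n) (Fin n) ℝ} (hX : X ∈ HP n) (p : Pos n) :
    0 ≤ pval X p ∧ pval X p ≤ 1 := by
  rcases p with q | q
  · exact hX.1 q.1 q.2
  · exact hX.2.1 q.1 q.2

lemma Phi_neg (val : Pos n → ℝ) (v : Fin n × Fin n) : Phi (-val) v = - Phi val v := by
  rw [Phi, Phi, prevR, prevR, prevC, prevC]
  simp only [Pi.neg_apply]
  split_ifs <;> ring

lemma Ymat_neg (val : Pos n → ℝ) : Ymat (-val) = -(Ymat val) := by
  funext i j
  simp only [Ymat, prevR, Pi.neg_apply, Matrix.neg_apply]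
  split_ifs <;> ring

lemma perturb_oneside {X : Matrix (Fin n) (Fin n) ℝ} (hX : X ∈ HP n)
    {val : Pos n → ℝ} (hvne : val ≠ 0) (hsupp : ∀ p, p ∉ Frac X → val p = 0)
    (hcons : ∀ v, Phi val v = 0) :
    ∃ t : ℝ, 0 < t ∧ X + t • Ymat val ∈ HP n ∧
      (Frac (X + t • Ymat val)).card < (Frac X).card := by
  classical
  have hpY : ∀ (t : ℝ) (p : Pos n), pval (X + t • Ymat val) p = pval X p + t * val p := by
    intro t p
    rw [pval_add, pval_smul, pval_Ymat val hcons]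
  set S : Finset (Pos n) := (Frac X).filter (fun p => val p ≠ 0) with hS
  have hSne : S.Nonempty := by
    obtain ⟨p, hp⟩ := Function.ne_iff.mp hvne
    refine ⟨p, ?_⟩
    rw [hS, Finset.mem_filter]
    refine ⟨?_, by simpa using hp⟩
    by_contra hc
    exact (by simpa using hp : val p ≠ 0) (hsupp p hc)
  set tp : Pos n → ℝ := fun p => if 0 < val p then (1 - pval X p) / val p
    else (pval X p) / (-val p) with htp
  have hfrac : ∀ p ∈ S, 0 < pval X p ∧ pval X p < 1 := by
    intro p hp
    rw [hS, Finset.mem_filter] at hp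
    exact isFrac_bounds (mem_Frac.mp hp.1) (pval_bounds hX p).1 (pval_bounds hX p).2
  have hSval : ∀ p ∈ S, val p ≠ 0 := by
    intro p hp
    rw [hS, Finset.mem_filter] at hp
    exact hp.2
  have htp_pos : ∀ p ∈ S, 0 < tp p := by
    intro p hp
    obtain ⟨hf0, hf1⟩ := hfrac p hp
    simp only [htp]
    split_ifs with h
    · exact div_pos (by linarith) h
    · have : val p < 0 := lt_of_le_of_ne (not_lt.mp h) (hSval p hp)
      exact div_pos hf0 (by linarith)
  set t := S.inf' hSne tp with ht
  have ht_pos : 0 < t := by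
    rw [ht, Finset.lt_inf'_iff]
    exact htp_pos
  have hmin : ∀ p ∈ S, t ≤ tp p := fun p hp => Finset.inf'_le tp hp
  -- bounds after perturbation
  have hbounds : ∀ p : Pos n, 0 ≤ pval X p + t * val p ∧ pval X p + t * val p ≤ 1 := by
    intro p
    rcases eq_or_ne (val p) 0 with h0 | h0
    · rw [h0]
      have := pval_bounds hX p
      constructor <;> linarith [this.1, this.2]
    · have hpS : p ∈ S := by
        rw [hS, Finset.mem_filter]
        refine ⟨?_, h0⟩
        by_contra hc
        exact h0 (hsupp p hc)
      obtain ⟨hf0, hf1⟩ := hfrac p hpS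
      have hle := hmin p hpS
      rcases lt_or_gt_of_ne h0 with hneg | hpos
      · constructor
        · have h1 : tp p = pval X p / (-val p) := by
            simp only [htp]
            rw [if_neg (by linarith)]
          rw [h1] at hle
          have h2 : t * (-val p) ≤ pval X p :=
            (le_div_iff₀ (by linarith : (0:ℝ) < -val p)).mp hle
          nlinarith
        · nlinarith [ht_pos]
      · constructor
        · nlinarith [ht_pos]
        · have h1 : tp p = (1 - pval X p) / val p := by
            simp only [htp]
            rw [if_pos hpos]
          rw [h1, le_div_iff₀ hpos] at hle
          linarith
  set X' := X + t • Ymat val with hX'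
  have hX'HP : X' ∈ HP n := by
    refine ⟨fun i j => ?_, fun i j => ?_, fun i => ?_, fun j => ?_⟩
    · have := hbounds (Sum.inl (i, j))
      rw [← hpY t (Sum.inl (i, j))] at this
      exact this
    · have := hbounds (Sum.inr (i, j))
      rw [← hpY t (Sum.inr (i, j))] at this
      exact this
    · have hn : 0 < n := i.pos
      have hj : ((⟨n - 1, by omega⟩ : Fin n) : ℕ) + 1 = n := by simp; omega
      rw [← rowPartial_eq_sum X' i hj]
      have h1 : rowPartial X' i ⟨n - 1, by omega⟩ = pval X' (Sum.inl (i, ⟨n - 1, by omega⟩)) := rfl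
      rw [h1, hpY, hsupp _ (lastRow_not_mem_Frac hX i hj)]
      have h2 : pval X (Sum.inl (i, ⟨n - 1, by omega⟩)) = rowPartial X i ⟨n - 1, by omega⟩ := rfl
      rw [h2, rowPartial_last_of_HP hX i hj]
      ring
    · have hn : 0 < n := j.pos
      have hi : ((⟨n - 1, by omega⟩ : Fin n) : ℕ) + 1 = n := by simp; omega
      rw [← colPartial_eq_sum X' j hi]
      have h1 : colPartial X' ⟨n - 1, by omega⟩ j = pval X' (Sum.inr (⟨n - 1, by omega⟩, j)) := rfl
      rw [h1, hpY, hsupp _ (lastCol_not_mem_Frac hX j hi)]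
      have h2 : pval X (Sum.inr (⟨n - 1, by omega⟩, j)) = colPartial X ⟨n - 1, by omega⟩ j := rfl
      rw [h2, colPartial_last_of_HP hX j hi]
      ring
  -- the minimizing position becomes integral
  obtain ⟨pstar, hpstarS, hpstar⟩ := S.exists_mem_eq_inf' hSne tp
  have hsub : Frac X' ⊆ Frac X := by
    intro p hp
    by_contra hc
    have h0 := hsupp p hc
    rw [mem_Frac, hpY, h0] at hp
    simp only [mul_zero, add_zero] at hp
    exact hc (mem_Frac.mpr hp)
  have hpstar_notin : pstar ∉ Frac X' := by
    rw [mem_Frac, hpY]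
    have hvp := hSval pstar hpstarS
    have hvne0 : -val pstar ≠ 0 := neg_ne_zero.mpr hvp
    rcases lt_or_gt_of_ne hvp with hneg | hpos
    · have h1 : t = pval X pstar / (-val pstar) := by
        rw [ht, hpstar]
        simp only [htp]
        rw [if_neg (by linarith)]
      rw [h1]
      have hval : pval X pstar + pval X pstar / (-val pstar) * val pstar = 0 := by
        field_simp
        ring
      rw [hval]
      simp [IsFrac]
    · have h1 : t = (1 - pval X pstar) / val pstar := by
        rw [ht, hpstar]
        simp only [htp]
        rw [if_pos hpos]
      rw [h1]
      have hval : pval X pstar + (1 - pval X pstar) / val pstar * val pstar = 1 := by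
        field_simp
        ring
      rw [hval]
      simp [IsFrac]
  have hpstar_in : pstar ∈ Frac X := by
    rw [hS, Finset.mem_filter] at hpstarS
    exact hpstarS.1
  refine ⟨t, ht_pos, hX'HP, ?_⟩
  apply Finset.card_lt_card
  rw [Finset.ssubset_def]
  exact ⟨hsub, fun h => hpstar_notin (h hpstar_in)⟩

lemma HP_subset_ASMPolytope : HP n ⊆ ASMPolytope n := by
  intro X hX
  suffices H : ∀ (k : ℕ) (X : Matrix (Fin n) (Fin n) ℝ), X ∈ HP n → (Frac X).card ≤ k →
      X ∈ ASMPolytope n from H _ X hX le_rfl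
  intro k
  induction k using Nat.strong_induction_on with
  | _ k ih =>
    intro X hX hk
    by_cases hne : (Frac X).Nonempty
    · obtain ⟨val, hvne, hsupp, hcons⟩ := exists_circulation hX hne
      obtain ⟨t₁, ht₁, hXP₁, hc₁⟩ := perturb_oneside hX hvne hsupp hcons
      have hvne' : (-val) ≠ 0 := neg_ne_zero.mpr hvne
      have hsupp' : ∀ p, p ∉ Frac X → (-val) p = 0 := fun p hp => by
        simp [hsupp p hp]
      have hcons' : ∀ v, Phi (-val) v = 0 := fun v => by
        rw [Phi_neg, hcons v, neg_zero]
      obtain ⟨t₂, ht₂, hXP₂, hc₂⟩ := perturb_oneside hX hvne' hsupp' hcons'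
      have hfk : 0 < (Frac X).card := Finset.card_pos.mpr hne
      have m₁ : X + t₁ • Ymat val ∈ ASMPolytope n :=
        ih ((Frac X).card - 1) (by omega) _ hXP₁ (by omega)
      have m₂ : X + t₂ • Ymat (-val) ∈ ASMPolytope n :=
        ih ((Frac X).card - 1) (by omega) _ hXP₂ (by omega)
      have hs : 0 < t₁ + t₂ := by linarith
      have hne0 : t₁ + t₂ ≠ 0 := ne_of_gt hs
      have hone : t₂ / (t₁ + t₂) + t₁ / (t₁ + t₂) = 1 := by
        rw [← add_div, div_eq_one_iff_eq hne0]
        ring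
      have hcomb : (t₂ / (t₁ + t₂)) • (X + t₁ • Ymat val)
          + (t₁ / (t₁ + t₂)) • (X + t₂ • Ymat (-val)) = X := by
        rw [Ymat_neg]
        rw [smul_add, smul_add, smul_smul, smul_smul, smul_neg, ← sub_eq_add_neg]
        rw [← add_sub_assoc]
        have e1 : (t₂ / (t₁ + t₂)) • X + (t₂ / (t₁ + t₂) * t₁) • Ymat val
            + (t₁ / (t₁ + t₂)) • X = X + (t₂ / (t₁ + t₂) * t₁) • Ymat val := by
          rw [add_right_comm, ← add_smul, hone, one_smul]
        rw [e1]
        have e2 : t₂ / (t₁ + t₂) * t₁ = t₁ / (t₁ + t₂) * t₂ := by ring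
        rw [e2, add_sub_cancel_right]
      have hcvx := (convex_convexHull ℝ {A : Matrix (Fin n) (Fin n) ℝ | IsASM A}) m₁ m₂
        (le_of_lt (div_pos ht₂ hs)) (le_of_lt (div_pos ht₁ hs)) hone
      rw [hcomb] at hcvx
      exact hcvx
    · rw [Finset.not_nonempty_iff_eq_empty] at hne
      have hall : ∀ p : Pos n, ¬ IsFrac (pval X p) := by
        intro p hp
        have hmem : p ∈ Frac X := mem_Frac.mpr hp
        rw [hne] at hmem
        exact Finset.notMem_empty p hmem
      have hASM : IsASM X := isASM_of_partials
        (fun i j => not_isFrac (hall (Sum.inl (i, j))))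
        (fun i j => not_isFrac (hall (Sum.inr (i, j))))
        hX.2.2.1 hX.2.2.2
      exact subset_convexHull ℝ _ hASM

lemma HP_eq_ASMPolytope : HP n = ASMPolytope n :=
  le_antisymm HP_subset_ASMPolytope ASMPolytope_subset_HP

end Kernel
section Faces

/-- every point of a face of a convex hull is a convex combination of the generators
lying in the face -/
lemma mem_hull_inter {S F : Set (Matrix (Fin n) (Fin n) ℝ)}
    (hF : IsExtreme ℝ (convexHull ℝ S) F) {x : Matrix (Fin n) (Fin n) ℝ} (hx : x ∈ F) :
    x ∈ convexHull ℝ (S ∩ F) := by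
  classical
  have hxS : x ∈ convexHull ℝ S := hF.1 hx
  rw [convexHull_eq] at hxS
  obtain ⟨ι, t, w, z, hw0, hw1, hzS, hcm⟩ := hxS
  set t' := t.filter (fun i => w i ≠ 0) with ht'
  have ht'sub : t' ⊆ t := Finset.filter_subset _ _
  have hcm' : t'.centerMass w z = x := by
    rw [ht', Finset.centerMass_filter_ne_zero, hcm]
  have hw1' : ∑ i ∈ t', w i = 1 := by
    rw [ht', Finset.sum_filter_ne_zero]
    exact hw1
  have hpos : ∀ i ∈ t', 0 < w i := by
    intro i hi
    rw [ht', Finset.mem_filter] at hi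
    exact lt_of_le_of_ne (hw0 i hi.1) (Ne.symm hi.2)
  have hzF : ∀ i ∈ t', z i ∈ F := by
    intro i hi
    have hsum_e : ∑ j ∈ t'.erase i, w j = 1 - w i := by
      have := Finset.add_sum_erase t' w hi
      rw [hw1'] at this
      linarith
    by_cases hwi : w i = 1
    · have herase : t'.erase i = ∅ := by
        by_contra hc
        obtain ⟨j, hj⟩ := Finset.nonempty_of_ne_empty hc
        have h1 := Finset.single_le_sum
          (f := w) (fun k hk => le_of_lt (hpos k (Finset.mem_of_mem_erase hk))) hj
        have h2 := hpos j (Finset.mem_of_mem_erase hj)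
        rw [hsum_e, hwi] at h1
        linarith
      have ht's : t' = {i} := by
        rw [← Finset.insert_erase hi, herase]
        rfl
      have : x = z i := by
        rw [← hcm', ht's, Finset.centerMass_singleton _ _ (by rw [hwi]; norm_num)]
      rw [← this]
      exact hx
    · have hwi1 : w i < 1 := by
        have h1 := Finset.single_le_sum (f := w) (fun k hk => le_of_lt (hpos k hk)) hi
        rw [hw1'] at h1
        exact lt_of_le_of_ne h1 hwi
      have hsum_ne : ∑ j ∈ t'.erase i, w j ≠ 0 := by rw [hsum_e]; intro h; apply hwi; linarith
      set y := (t'.erase i).centerMass w z with hy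
      have hyS : y ∈ convexHull ℝ S := by
        rw [hy]
        exact Finset.centerMass_mem_convexHull _
          (fun j hj => le_of_lt (hpos j (Finset.mem_of_mem_erase hj)))
          (by rw [hsum_e]; linarith)
          (fun j hj => hzS j (ht'sub (Finset.mem_of_mem_erase hj)))
      have hseg : x = (w i) • z i + (1 - w i) • y := by
        rw [← hcm', ← Finset.insert_erase hi,
          Finset.centerMass_insert _ _ _ (Finset.notMem_erase i t') hsum_ne, hsum_e]
        have : w i + (1 - w i) = 1 := by ring
        rw [this, div_one, div_one]
      have hzi_hull : z i ∈ convexHull ℝ S := subset_convexHull ℝ S (hzS i (ht'sub hi))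
      have hopen : x ∈ openSegment ℝ (z i) y :=
        ⟨w i, 1 - w i, hpos i hi, by linarith, by ring, hseg.symm⟩
      exact hF.2 hzi_hull hyS hx hopen
  rw [← hcm']
  exact Finset.centerMass_mem_convexHull t'
    (fun i hi => le_of_lt (hpos i hi)) (by rw [hw1']; norm_num)
    (fun i hi => ⟨hzS i (ht'sub hi), hzF i hi⟩)

/-- a face of the ASM polytope is the convex hull of its ASM members -/
lemma face_eq_hull_faceASMs {F : Set (Matrix (Fin n) (Fin n) ℝ)}
    (hF : IsFaceOf F (ASMPolytope n)) {x : Matrix (Fin n) (Fin n) ℝ} (hx : x ∈ F) :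
    x ∈ convexHull ℝ (faceASMs F) := by
  have h := mem_hull_inter (S := {A | IsASM A}) hF.1 hx
  have hset : {A : Matrix (Fin n) (Fin n) ℝ | IsASM A} ∩ F = faceASMs F := by
    ext A
    simp only [Set.mem_inter_iff, Set.mem_setOf_eq, faceASMs]
    tauto
  rwa [hset] at h

lemma faceASMs_subset {F : Set (Matrix (Fin n) (Fin n) ℝ)} :
    faceASMs F ⊆ F := fun A hA => hA.1

lemma faceASMs_finite (F : Set (Matrix (Fin n) (Fin n) ℝ)) : (faceASMs F).Finite :=
  Set.Finite.subset finite_setOf_isASM (fun A hA => hA.2)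

/-- level set of a linear functional bounded on a convex set is a face -/
lemma isFaceOf_level {F : Set (Matrix (Fin n) (Fin n) ℝ)} (hFc : Convex ℝ F)
    (g : Matrix (Fin n) (Fin n) ℝ → ℝ)
    (hlin : ∀ (a b : ℝ) (x y : Matrix (Fin n) (Fin n) ℝ), a + b = 1 →
      g (a • x + b • y) = a * g x + b * g y)
    (hbd : ∀ x ∈ F, 0 ≤ g x ∧ g x ≤ 1) {s : ℝ} (hs : s = 0 ∨ s = 1) :
    IsFaceOf {x | x ∈ F ∧ g x = s} F := by
  constructor
  · constructor
    · exact fun x hx => hx.1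
    · rintro x1 hx1 x2 hx2 x ⟨hxF, hgx⟩ ⟨a, b, ha, hb, hab, hx⟩
      rw [← hx, hlin a b x1 x2 hab] at hgx
      obtain ⟨h10, h11⟩ := hbd x1 hx1
      obtain ⟨h20, h21⟩ := hbd x2 hx2
      have hg1 : g x1 = s := by
        rcases hs with rfl | rfl
        · nlinarith
        · nlinarith
      have hg2 : g x2 = s := by
        rcases hs with rfl | rfl
        · nlinarith
        · nlinarith
      exact ⟨hx1, hg1⟩
  · rintro x1 ⟨hx1, hg1⟩ x2 ⟨hx2, hg2⟩ a b ha hb hab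
    refine ⟨hFc hx1 hx2 ha hb hab, ?_⟩
    rw [hlin a b x1 x2 hab, hg1, hg2, ← add_mul, hab, one_mul]

/-- two members of `F` taking a common extreme value of a bounded functional, with a third
member taking a different value, are not estranged -/
lemma not_estranged_of_level {F : Set (Matrix (Fin n) (Fin n) ℝ)} (hFc : Convex ℝ F)
    (g : Matrix (Fin n) (Fin n) ℝ → ℝ)
    (hlin : ∀ (a b : ℝ) (x y : Matrix (Fin n) (Fin n) ℝ), a + b = 1 →
      g (a • x + b • y) = a * g x + b * g y)
    (hbd : ∀ x ∈ F, 0 ≤ g x ∧ g x ≤ 1) {s : ℝ} (hs : s = 0 ∨ s = 1)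
    {A B C : Matrix (Fin n) (Fin n) ℝ} (hA : A ∈ F) (hB : B ∈ F) (hC : C ∈ F)
    (hgA : g A = s) (hgB : g B = s) (hgC : g C ≠ s) : ¬ Estranged F A B := by
  intro hEst
  have hface := isFaceOf_level hFc g hlin hbd hs
  have hne : {x | x ∈ F ∧ g x = s} ≠ F := by
    intro h
    have : C ∈ {x | x ∈ F ∧ g x = s} := h.symm ▸ hC
    exact hgC this.2
  exact hEst _ hface hne ⟨⟨hA, hgA⟩, ⟨hB, hgB⟩⟩

/-- bounds on strict partial sums over the polytope -/
lemma rowPartialLt_bounds {X : Matrix (Fin n) (Fin n) ℝ} (hX : X ∈ HP n) (i j : Fin n) :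
    0 ≤ rowPartialLt X i j ∧ rowPartialLt X i j ≤ 1 := by
  rcases Nat.eq_zero_or_pos (j : ℕ) with hj | hj
  · rw [rowPartialLt_zero _ _ hj]; norm_num
  · have hlt : (j : ℕ) - 1 < n := by have := j.isLt; omega
    rw [rowPartialLt_eq_prev X i (j' := ⟨(j : ℕ) - 1, hlt⟩) (by simp; omega)]
    exact hX.1 i _

lemma colPartialLt_bounds {X : Matrix (Fin n) (Fin n) ℝ} (hX : X ∈ HP n) (i j : Fin n) :
    0 ≤ colPartialLt X i j ∧ colPartialLt X i j ≤ 1 := by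
  rcases Nat.eq_zero_or_pos (i : ℕ) with hi | hi
  · rw [colPartialLt_zero _ _ hi]; norm_num
  · have hlt : (i : ℕ) - 1 < n := by have := i.isLt; omega
    rw [colPartialLt_eq_prev X j (i' := ⟨(i : ℕ) - 1, hlt⟩) (by simp; omega)]
    exact hX.2.1 _ j

lemma rowPartialLt_add (A B : Matrix (Fin n) (Fin n) ℝ) (i j : Fin n) :
    rowPartialLt (A + B) i j = rowPartialLt A i j + rowPartialLt B i j := by
  simp [rowPartialLt, Matrix.add_apply, Finset.sum_add_distrib]

lemma rowPartialLt_smul (c : ℝ) (A : Matrix (Fin n) (Fin n) ℝ) (i j : Fin n) :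
    rowPartialLt (c • A) i j = c * rowPartialLt A i j := by
  simp [rowPartialLt, Matrix.smul_apply, Finset.mul_sum, smul_eq_mul]

lemma colPartialLt_add (A B : Matrix (Fin n) (Fin n) ℝ) (i j : Fin n) :
    colPartialLt (A + B) i j = colPartialLt A i j + colPartialLt B i j := by
  simp [colPartialLt, Matrix.add_apply, Finset.sum_add_distrib]

lemma colPartialLt_smul (c : ℝ) (A : Matrix (Fin n) (Fin n) ℝ) (i j : Fin n) :
    colPartialLt (c • A) i j = c * colPartialLt A i j := by
  simp [colPartialLt, Matrix.smul_apply, Finset.mul_sum, smul_eq_mul]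

end Faces
section Activity

/-- activity of row/column positions relative to a set of matrices -/
def RAct (X : Set (Matrix (Fin n) (Fin n) ℝ)) (i j : Fin n) : Prop :=
  ∃ C ∈ X, ∃ D ∈ X, rowPartial C i j ≠ rowPartial D i j

def RActLt (X : Set (Matrix (Fin n) (Fin n) ℝ)) (i j : Fin n) : Prop :=
  ∃ C ∈ X, ∃ D ∈ X, rowPartialLt C i j ≠ rowPartialLt D i j

def CAct (X : Set (Matrix (Fin n) (Fin n) ℝ)) (i j : Fin n) : Prop :=
  ∃ C ∈ X, ∃ D ∈ X, colPartial C i j ≠ colPartial D i j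

def CActLt (X : Set (Matrix (Fin n) (Fin n) ℝ)) (i j : Fin n) : Prop :=
  ∃ C ∈ X, ∃ D ∈ X, colPartialLt C i j ≠ colPartialLt D i j

lemma RAct_iff {X : Set (Matrix (Fin n) (Fin n) ℝ)} {A : Matrix (Fin n) (Fin n) ℝ}
    (hA : A ∈ X) (i j : Fin n) :
    RAct X i j ↔ ∃ C ∈ X, rowPartial C i j ≠ rowPartial A i j := by
  constructor
  · rintro ⟨C, hC, D, hD, h⟩
    by_cases hCA : rowPartial C i j = rowPartial A i j
    · exact ⟨D, hD, fun hDA => h (by rw [hCA, hDA])⟩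
    · exact ⟨C, hC, hCA⟩
  · rintro ⟨C, hC, h⟩
    exact ⟨C, hC, A, hA, h⟩

lemma RActLt_iff {X : Set (Matrix (Fin n) (Fin n) ℝ)} {A : Matrix (Fin n) (Fin n) ℝ}
    (hA : A ∈ X) (i j : Fin n) :
    RActLt X i j ↔ ∃ C ∈ X, rowPartialLt C i j ≠ rowPartialLt A i j := by
  constructor
  · rintro ⟨C, hC, D, hD, h⟩
    by_cases hCA : rowPartialLt C i j = rowPartialLt A i j
    · exact ⟨D, hD, fun hDA => h (by rw [hCA, hDA])⟩
    · exact ⟨C, hC, hCA⟩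
  · rintro ⟨C, hC, h⟩
    exact ⟨C, hC, A, hA, h⟩

lemma CAct_iff {X : Set (Matrix (Fin n) (Fin n) ℝ)} {A : Matrix (Fin n) (Fin n) ℝ}
    (hA : A ∈ X) (i j : Fin n) :
    CAct X i j ↔ ∃ C ∈ X, colPartial C i j ≠ colPartial A i j := by
  constructor
  · rintro ⟨C, hC, D, hD, h⟩
    by_cases hCA : colPartial C i j = colPartial A i j
    · exact ⟨D, hD, fun hDA => h (by rw [hCA, hDA])⟩
    · exact ⟨C, hC, hCA⟩
  · rintro ⟨C, hC, h⟩
    exact ⟨C, hC, A, hA, h⟩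

lemma CActLt_iff {X : Set (Matrix (Fin n) (Fin n) ℝ)} {A : Matrix (Fin n) (Fin n) ℝ}
    (hA : A ∈ X) (i j : Fin n) :
    CActLt X i j ↔ ∃ C ∈ X, colPartialLt C i j ≠ colPartialLt A i j := by
  constructor
  · rintro ⟨C, hC, D, hD, h⟩
    by_cases hCA : colPartialLt C i j = colPartialLt A i j
    · exact ⟨D, hD, fun hDA => h (by rw [hCA, hDA])⟩
    · exact ⟨C, hC, hCA⟩
  · rintro ⟨C, hC, h⟩
    exact ⟨C, hC, A, hA, h⟩

lemma not_RAct_last {X : Set (Matrix (Fin n) (Fin n) ℝ)} (hX : ∀ C ∈ X, IsASM C)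
    (i : Fin n) {j : Fin n} (hj : (j : ℕ) + 1 = n) : ¬ RAct X i j := by
  rintro ⟨C, hC, D, hD, h⟩
  apply h
  rw [rowPartial_eq_sum C i hj, rowPartial_eq_sum D i hj, (hX C hC).2.2.2.1 i,
    (hX D hD).2.2.2.1 i]

lemma not_CAct_last {X : Set (Matrix (Fin n) (Fin n) ℝ)} (hX : ∀ C ∈ X, IsASM C)
    (j : Fin n) {i : Fin n} (hi : (i : ℕ) + 1 = n) : ¬ CAct X i j := by
  rintro ⟨C, hC, D, hD, h⟩
  apply h
  rw [colPartial_eq_sum C j hi, colPartial_eq_sum D j hi, (hX C hC).2.2.2.2 j,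
    (hX D hD).2.2.2.2 j]

lemma not_RActLt_zero (X : Set (Matrix (Fin n) (Fin n) ℝ)) (i : Fin n) {j : Fin n}
    (hj : (j : ℕ) = 0) : ¬ RActLt X i j := by
  rintro ⟨C, _, D, _, h⟩
  exact h (by rw [rowPartialLt_zero _ _ hj, rowPartialLt_zero _ _ hj])

lemma not_CActLt_zero (X : Set (Matrix (Fin n) (Fin n) ℝ)) (j : Fin n) {i : Fin n}
    (hi : (i : ℕ) = 0) : ¬ CActLt X i j := by
  rintro ⟨C, _, D, _, h⟩
  exact h (by rw [colPartialLt_zero _ _ hi, colPartialLt_zero _ _ hi])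

lemma RActLt_iff_prev (X : Set (Matrix (Fin n) (Fin n) ℝ)) (i : Fin n) {j j' : Fin n}
    (h : (j' : ℕ) + 1 = (j : ℕ)) : RActLt X i j ↔ RAct X i j' := by
  unfold RActLt RAct
  constructor <;> rintro ⟨C, hC, D, hD, hne⟩ <;> refine ⟨C, hC, D, hD, ?_⟩
  · rwa [rowPartialLt_eq_prev C i h, rowPartialLt_eq_prev D i h] at hne
  · rwa [rowPartialLt_eq_prev C i h, rowPartialLt_eq_prev D i h]

lemma CActLt_iff_prev (X : Set (Matrix (Fin n) (Fin n) ℝ)) (j : Fin n) {i i' : Fin n}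
    (h : (i' : ℕ) + 1 = (i : ℕ)) : CActLt X i j ↔ CAct X i' j := by
  unfold CActLt CAct
  constructor <;> rintro ⟨C, hC, D, hD, hne⟩ <;> refine ⟨C, hC, D, hD, ?_⟩
  · rwa [colPartialLt_eq_prev C j h, colPartialLt_eq_prev D j h] at hne
  · rwa [colPartialLt_eq_prev C j h, colPartialLt_eq_prev D j h]

lemma flip_val {x y : ℝ} (hx : x = 0 ∨ x = 1) (hy : y = 0 ∨ y = 1) (hxy : x ≠ y) :
    x = 1 - y := by
  rcases hx with rfl | rfl <;> rcases hy with rfl | rfl <;> norm_num at hxy <;> norm_num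

/-- parity of differences of two ASMs at a grid vertex -/
lemma pair_parity {A B : Matrix (Fin n) (Fin n) ℝ} (hA : IsASM A) (hB : IsASM B)
    (i j : Fin n) :
    Even ((if rowPartialLt A i j ≠ rowPartialLt B i j then 1 else 0) +
      (if rowPartial A i j ≠ rowPartial B i j then 1 else 0) +
      (if colPartialLt A i j ≠ colPartialLt B i j then 1 else 0) +
      (if colPartial A i j ≠ colPartial B i j then (1:ℕ) else 0)) := by
  have hconsA := conservation A i j
  have hconsB := conservation B i j
  rcases rowPartialLt_mem hA.2.1 i j with h1 | h1 <;>
    rcases rowPartialLt_mem hB.2.1 i j with h2 | h2 <;>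
    rcases hA.2.1 i j with h3 | h3 <;> rcases hB.2.1 i j with h4 | h4 <;>
    rcases colPartialLt_mem hA.2.2.1 i j with h5 | h5 <;>
    rcases colPartialLt_mem hB.2.2.1 i j with h6 | h6 <;>
    rcases hA.2.2.1 i j with h7 | h7 <;> rcases hB.2.2.1 i j with h8 | h8 <;>
    simp only [h1, h2, h3, h4, h5, h6, h7, h8] at hconsA hconsB ⊢ <;>
    (try norm_num at hconsA) <;> (try norm_num at hconsB) <;>
    (try norm_num) <;>
    try decide

end Activity
/-- consistency of the flip at each grid vertex, under the even-degree hypothesis -/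
lemma flip_consistent {X : Set (Matrix (Fin n) (Fin n) ℝ)} (hX : ∀ C ∈ X, IsASM C)
    {A : Matrix (Fin n) (Fin n) ℝ} (hA : A ∈ X) (i j : Fin n)
    (hEven : Even ((if RActLt X i j then 1 else 0) + (if RAct X i j then 1 else 0) +
      (if CActLt X i j then 1 else 0) + (if CAct X i j then (1:ℕ) else 0))) :
    (if RAct X i j then 1 - rowPartial A i j else rowPartial A i j) -
      (if RActLt X i j then 1 - rowPartialLt A i j else rowPartialLt A i j) =
    (if CAct X i j then 1 - colPartial A i j else colPartial A i j) -
      (if CActLt X i j then 1 - colPartialLt A i j else colPartialLt A i j) := by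
  have hAASM := hX A hA
  have hconsA := conservation A i j
  by_cases a1 : RActLt X i j <;> by_cases a2 : RAct X i j <;>
    by_cases a3 : CActLt X i j <;> by_cases a4 : CAct X i j <;>
    simp only [a1, a2, a3, a4, if_true, if_false, ite_true, ite_false] at hEven ⊢ <;>
    try simp [Nat.even_iff] at hEven
  · -- all active
    linarith [hconsA]
  · -- RActLt, RAct active
    obtain ⟨C, hC, hd1⟩ := (RActLt_iff hA i j).mp a1
    have hCASM := hX C hC
    have hag3 : colPartialLt C i j = colPartialLt A i j := by
      by_contra hc; exact a3 ⟨C, hC, A, hA, hc⟩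
    have hag4 : colPartial C i j = colPartial A i j := by
      by_contra hc; exact a4 ⟨C, hC, A, hA, hc⟩
    have e1 := flip_val (rowPartialLt_mem hCASM.2.1 i j) (rowPartialLt_mem hAASM.2.1 i j) hd1
    have hd2 : rowPartial C i j ≠ rowPartial A i j := by
      intro he
      have hconsC := conservation C i j
      rw [e1, he, hag3, hag4] at hconsC
      rcases rowPartialLt_mem hAASM.2.1 i j with hv | hv <;> linarith [hconsA, hconsC, hv]
    have e2 := flip_val (hCASM.2.1 i j) (hAASM.2.1 i j) hd2
    have hconsC := conservation C i j
    rw [e1, e2, hag3, hag4] at hconsC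
    linarith [hconsC]
  · -- RActLt, CActLt active
    obtain ⟨C, hC, hd1⟩ := (RActLt_iff hA i j).mp a1
    have hCASM := hX C hC
    have hag2 : rowPartial C i j = rowPartial A i j := by
      by_contra hc; exact a2 ⟨C, hC, A, hA, hc⟩
    have hag4 : colPartial C i j = colPartial A i j := by
      by_contra hc; exact a4 ⟨C, hC, A, hA, hc⟩
    have e1 := flip_val (rowPartialLt_mem hCASM.2.1 i j) (rowPartialLt_mem hAASM.2.1 i j) hd1
    have hd3 : colPartialLt C i j ≠ colPartialLt A i j := by
      intro he
      have hconsC := conservation C i j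
      rw [e1, he, hag2, hag4] at hconsC
      rcases rowPartialLt_mem hAASM.2.1 i j with hv | hv <;> linarith [hconsA, hconsC, hv]
    have e3 := flip_val (colPartialLt_mem hCASM.2.2.1 i j) (colPartialLt_mem hAASM.2.2.1 i j) hd3
    have hconsC := conservation C i j
    rw [e1, e3, hag2, hag4] at hconsC
    linarith [hconsC]
  · -- RActLt, CAct active
    obtain ⟨C, hC, hd1⟩ := (RActLt_iff hA i j).mp a1
    have hCASM := hX C hC
    have hag2 : rowPartial C i j = rowPartial A i j := by
      by_contra hc; exact a2 ⟨C, hC, A, hA, hc⟩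
    have hag3 : colPartialLt C i j = colPartialLt A i j := by
      by_contra hc; exact a3 ⟨C, hC, A, hA, hc⟩
    have e1 := flip_val (rowPartialLt_mem hCASM.2.1 i j) (rowPartialLt_mem hAASM.2.1 i j) hd1
    have hd4 : colPartial C i j ≠ colPartial A i j := by
      intro he
      have hconsC := conservation C i j
      rw [e1, he, hag2, hag3] at hconsC
      rcases rowPartialLt_mem hAASM.2.1 i j with hv | hv <;> linarith [hconsA, hconsC, hv]
    have e4 := flip_val (hCASM.2.2.1 i j) (hAASM.2.2.1 i j) hd4
    have hconsC := conservation C i j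
    rw [e1, e4, hag2, hag3] at hconsC
    linarith [hconsC]
  · -- RAct, CActLt active
    obtain ⟨C, hC, hd2⟩ := (RAct_iff hA i j).mp a2
    have hCASM := hX C hC
    have hag1 : rowPartialLt C i j = rowPartialLt A i j := by
      by_contra hc; exact a1 ⟨C, hC, A, hA, hc⟩
    have hag4 : colPartial C i j = colPartial A i j := by
      by_contra hc; exact a4 ⟨C, hC, A, hA, hc⟩
    have e2 := flip_val (hCASM.2.1 i j) (hAASM.2.1 i j) hd2
    have hd3 : colPartialLt C i j ≠ colPartialLt A i j := by
      intro he
      have hconsC := conservation C i j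
      rw [e2, he, hag1, hag4] at hconsC
      rcases hAASM.2.1 i j with hv | hv <;> linarith [hconsA, hconsC, hv]
    have e3 := flip_val (colPartialLt_mem hCASM.2.2.1 i j) (colPartialLt_mem hAASM.2.2.1 i j) hd3
    have hconsC := conservation C i j
    rw [e2, e3, hag1, hag4] at hconsC
    linarith [hconsC]
  · -- RAct, CAct active
    obtain ⟨C, hC, hd2⟩ := (RAct_iff hA i j).mp a2
    have hCASM := hX C hC
    have hag1 : rowPartialLt C i j = rowPartialLt A i j := by
      by_contra hc; exact a1 ⟨C, hC, A, hA, hc⟩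
    have hag3 : colPartialLt C i j = colPartialLt A i j := by
      by_contra hc; exact a3 ⟨C, hC, A, hA, hc⟩
    have e2 := flip_val (hCASM.2.1 i j) (hAASM.2.1 i j) hd2
    have hd4 : colPartial C i j ≠ colPartial A i j := by
      intro he
      have hconsC := conservation C i j
      rw [e2, he, hag1, hag3] at hconsC
      rcases hAASM.2.1 i j with hv | hv <;> linarith [hconsA, hconsC, hv]
    have e4 := flip_val (hCASM.2.2.1 i j) (hAASM.2.2.1 i j) hd4
    have hconsC := conservation C i j
    rw [e2, e4, hag1, hag3] at hconsC
    linarith [hconsC]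
  · -- CActLt, CAct active
    obtain ⟨C, hC, hd3⟩ := (CActLt_iff hA i j).mp a3
    have hCASM := hX C hC
    have hag1 : rowPartialLt C i j = rowPartialLt A i j := by
      by_contra hc; exact a1 ⟨C, hC, A, hA, hc⟩
    have hag2 : rowPartial C i j = rowPartial A i j := by
      by_contra hc; exact a2 ⟨C, hC, A, hA, hc⟩
    have e3 := flip_val (colPartialLt_mem hCASM.2.2.1 i j) (colPartialLt_mem hAASM.2.2.1 i j) hd3
    have hd4 : colPartial C i j ≠ colPartial A i j := by
      intro he
      have hconsC := conservation C i j
      rw [e3, he, hag1, hag2] at hconsC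
      rcases colPartialLt_mem hAASM.2.2.1 i j with hv | hv <;> linarith [hconsA, hconsC, hv]
    have e4 := flip_val (hCASM.2.2.1 i j) (hAASM.2.2.1 i j) hd4
    have hconsC := conservation C i j
    rw [e3, e4, hag1, hag2] at hconsC
    linarith [hconsC]
  · -- none active
    linarith [hconsA]
section Flip

noncomputable def flipR (X : Set (Matrix (Fin n) (Fin n) ℝ)) (A : Matrix (Fin n) (Fin n) ℝ)
    (i j : Fin n) : ℝ :=
  if RAct X i j then 1 - rowPartial A i j else rowPartial A i j

noncomputable def flipRLt (X : Set (Matrix (Fin n) (Fin n) ℝ)) (A : Matrix (Fin n) (Fin n) ℝ)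
    (i j : Fin n) : ℝ :=
  if RActLt X i j then 1 - rowPartialLt A i j else rowPartialLt A i j

noncomputable def flipC (X : Set (Matrix (Fin n) (Fin n) ℝ)) (A : Matrix (Fin n) (Fin n) ℝ)
    (i j : Fin n) : ℝ :=
  if CAct X i j then 1 - colPartial A i j else colPartial A i j

noncomputable def flipCLt (X : Set (Matrix (Fin n) (Fin n) ℝ)) (A : Matrix (Fin n) (Fin n) ℝ)
    (i j : Fin n) : ℝ :=
  if CActLt X i j then 1 - colPartialLt A i j else colPartialLt A i j

/-- the reversal of `A` along the doubly directed part of `X` -/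
noncomputable def flipASM (X : Set (Matrix (Fin n) (Fin n) ℝ)) (A : Matrix (Fin n) (Fin n) ℝ) :
    Matrix (Fin n) (Fin n) ℝ :=
  fun i j => flipR X A i j - flipRLt X A i j

lemma flipRLt_zero (X : Set (Matrix (Fin n) (Fin n) ℝ)) (A : Matrix (Fin n) (Fin n) ℝ)
    (i : Fin n) {j : Fin n} (hj : (j : ℕ) = 0) : flipRLt X A i j = 0 := by
  rw [flipRLt, if_neg (not_RActLt_zero X i hj), rowPartialLt_zero A i hj]

lemma flipCLt_zero (X : Set (Matrix (Fin n) (Fin n) ℝ)) (A : Matrix (Fin n) (Fin n) ℝ)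
    (j : Fin n) {i : Fin n} (hi : (i : ℕ) = 0) : flipCLt X A i j = 0 := by
  rw [flipCLt, if_neg (not_CActLt_zero X j hi), colPartialLt_zero A j hi]

lemma flipRLt_eq_prev (X : Set (Matrix (Fin n) (Fin n) ℝ)) (A : Matrix (Fin n) (Fin n) ℝ)
    (i : Fin n) {j j' : Fin n} (h : (j' : ℕ) + 1 = (j : ℕ)) :
    flipRLt X A i j = flipR X A i j' := by
  rw [flipRLt, flipR, rowPartialLt_eq_prev A i h]
  by_cases hc : RAct X i j'
  · rw [if_pos ((RActLt_iff_prev X i h).mpr hc), if_pos hc]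
  · rw [if_neg (fun hh => hc ((RActLt_iff_prev X i h).mp hh)), if_neg hc]

lemma flipCLt_eq_prev (X : Set (Matrix (Fin n) (Fin n) ℝ)) (A : Matrix (Fin n) (Fin n) ℝ)
    (j : Fin n) {i i' : Fin n} (h : (i' : ℕ) + 1 = (i : ℕ)) :
    flipCLt X A i j = flipC X A i' j := by
  rw [flipCLt, flipC, colPartialLt_eq_prev A j h]
  by_cases hc : CAct X i' j
  · rw [if_pos ((CActLt_iff_prev X j h).mpr hc), if_pos hc]
  · rw [if_neg (fun hh => hc ((CActLt_iff_prev X j h).mp hh)), if_neg hc]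

lemma rowPartial_flipASM (X : Set (Matrix (Fin n) (Fin n) ℝ)) (A : Matrix (Fin n) (Fin n) ℝ)
    (i : Fin n) : ∀ j, rowPartial (flipASM X A) i j = flipR X A i j := by
  suffices H : ∀ (k : ℕ) (j : Fin n), (j : ℕ) = k →
      rowPartial (flipASM X A) i j = flipR X A i j by
    exact fun j => H (j : ℕ) j rfl
  intro k
  induction k using Nat.strong_induction_on with
  | _ k ih =>
    intro j hk
    have hlt : rowPartialLt (flipASM X A) i j = flipRLt X A i j := by
      rcases Nat.eq_zero_or_pos (j : ℕ) with h0 | h0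
      · rw [rowPartialLt_zero _ _ h0, flipRLt_zero X A i h0]
      · have hprev : ((fpred j : Fin n) : ℕ) + 1 = (j : ℕ) := by simp [fpred]; omega
        rw [rowPartialLt_eq_prev _ _ hprev, ih ((fpred j : Fin n) : ℕ) (by simp [fpred]; omega) _ rfl,
          flipRLt_eq_prev X A i hprev]
    rw [rowPartial_split_s9, hlt, flipASM]
    ring

lemma colPartial_flipASM {X : Set (Matrix (Fin n) (Fin n) ℝ)} (hX : ∀ C ∈ X, IsASM C)
    {A : Matrix (Fin n) (Fin n) ℝ} (hA : A ∈ X)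
    (hEv : ∀ i j : Fin n, Even ((if RActLt X i j then 1 else 0) + (if RAct X i j then 1 else 0) +
      (if CActLt X i j then 1 else 0) + (if CAct X i j then (1:ℕ) else 0)))
    (j : Fin n) : ∀ i, colPartial (flipASM X A) i j = flipC X A i j := by
  suffices H : ∀ (k : ℕ) (i : Fin n), (i : ℕ) = k →
      colPartial (flipASM X A) i j = flipC X A i j by
    exact fun i => H (i : ℕ) i rfl
  intro k
  induction k using Nat.strong_induction_on with
  | _ k ih =>
    intro i hk
    have hlt : colPartialLt (flipASM X A) i j = flipCLt X A i j := by
      rcases Nat.eq_zero_or_pos (i : ℕ) with h0 | h0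
      · rw [colPartialLt_zero _ _ h0, flipCLt_zero X A j h0]
      · have hprev : ((fpred i : Fin n) : ℕ) + 1 = (i : ℕ) := by simp [fpred]; omega
        rw [colPartialLt_eq_prev _ _ hprev, ih ((fpred i : Fin n) : ℕ) (by simp [fpred]; omega) _ rfl,
          flipCLt_eq_prev X A j hprev]
    have hentry : flipASM X A i j = flipC X A i j - flipCLt X A i j := by
      have := flip_consistent hX hA i j (hEv i j)
      rw [flipASM]
      exact this
    rw [colPartial_split, hlt, hentry]
    ring

lemma isASM_flipASM {X : Set (Matrix (Fin n) (Fin n) ℝ)} (hX : ∀ C ∈ X, IsASM C)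
    {A : Matrix (Fin n) (Fin n) ℝ} (hA : A ∈ X)
    (hEv : ∀ i j : Fin n, Even ((if RActLt X i j then 1 else 0) + (if RAct X i j then 1 else 0) +
      (if CActLt X i j then 1 else 0) + (if CAct X i j then (1:ℕ) else 0))) :
    IsASM (flipASM X A) := by
  have hAASM := hX A hA
  have hrmem : ∀ i j, rowPartial (flipASM X A) i j = 0 ∨ rowPartial (flipASM X A) i j = 1 := by
    intro i j
    rw [rowPartial_flipASM, flipR]
    split_ifs
    · rcases hAASM.2.1 i j with h | h <;> rw [h] <;> [right; left] <;> norm_num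
    · exact hAASM.2.1 i j
  have hcmem : ∀ i j, colPartial (flipASM X A) i j = 0 ∨ colPartial (flipASM X A) i j = 1 := by
    intro i j
    rw [colPartial_flipASM hX hA hEv, flipC]
    split_ifs
    · rcases hAASM.2.2.1 i j with h | h <;> rw [h] <;> [right; left] <;> norm_num
    · exact hAASM.2.2.1 i j
  refine isASM_of_partials hrmem hcmem (fun i => ?_) (fun j => ?_)
  · have hn : 0 < n := i.pos
    have hj : ((⟨n - 1, by omega⟩ : Fin n) : ℕ) + 1 = n := by simp; omega
    rw [← rowPartial_eq_sum _ i hj, rowPartial_flipASM, flipR,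
      if_neg (not_RAct_last hX i hj), rowPartial_eq_sum A i hj, hAASM.2.2.2.1 i]
  · have hn : 0 < n := j.pos
    have hi : ((⟨n - 1, by omega⟩ : Fin n) : ℕ) + 1 = n := by simp; omega
    rw [← colPartial_eq_sum _ j hi, colPartial_flipASM hX hA hEv, flipC,
      if_neg (not_CAct_last hX j hi), colPartial_eq_sum A j hi, hAASM.2.2.2.2 j]

end Flip
section Degree

lemma ddDegree_eq {X : Set (Matrix (Fin n) (Fin n) ℝ)} (hX : ∀ C ∈ X, IsASM C)
    (i j : Fin n) :
    ddDegree X (i, j) = (if RActLt X i j then 1 else 0) + (if RAct X i j then 1 else 0) +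
      (if CActLt X i j then 1 else 0) + (if CAct X i j then (1:ℕ) else 0) := by
  classical
  have h1 : (ddGraph X).neighborSet (i, j) =
      ↑(Finset.univ.filter (fun w => (ddGraph X).Adj (i, j) w)) := by
    ext w
    simp [SimpleGraph.mem_neighborSet]
  rw [ddDegree, h1, Set.ncard_coe_finset]
  have hAdj : ∀ w : Fin n × Fin n, (ddGraph X).Adj (i, j) w ↔
      ((i = w.1 ∧ (w.2 : ℕ) + 1 = (j : ℕ) ∧ RActLt X i j) ∨
        (i = w.1 ∧ (j : ℕ) + 1 = (w.2 : ℕ) ∧ RAct X i j)) ∨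
      ((j = w.2 ∧ (w.1 : ℕ) + 1 = (i : ℕ) ∧ CActLt X i j) ∨
        (j = w.2 ∧ (i : ℕ) + 1 = (w.1 : ℕ) ∧ CAct X i j)) := by
    intro w
    have hdef : (ddGraph X).Adj (i, j) w ↔
        ((i = w.1 ∧ (((j : ℕ) + 1 = (w.2 : ℕ)) ∨ ((w.2 : ℕ) + 1 = (j : ℕ))) ∧
          ∃ A ∈ X, ∃ B ∈ X, rowPartial A i (min j w.2) ≠ rowPartial B i (min j w.2)) ∨
        (j = w.2 ∧ (((i : ℕ) + 1 = (w.1 : ℕ)) ∨ ((w.1 : ℕ) + 1 = (i : ℕ))) ∧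
          ∃ A ∈ X, ∃ B ∈ X, colPartial A (min i w.1) j ≠ colPartial B (min i w.1) j)) :=
      Iff.rfl
    rw [hdef]
    constructor
    · rintro (⟨h1, h2 | h2, h3⟩ | ⟨h1, h2 | h2, h3⟩)
      · -- right neighbor
        rw [min_eq_left (by rw [Fin.le_def]; omega : j ≤ w.2)] at h3
        exact Or.inl (Or.inr ⟨h1, h2, h3⟩)
      · -- left neighbor
        rw [min_eq_right (by rw [Fin.le_def]; omega : w.2 ≤ j)] at h3
        exact Or.inl (Or.inl ⟨h1, h2, (RActLt_iff_prev X i h2).mpr h3⟩)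
      · -- down neighbor
        rw [min_eq_left (by rw [Fin.le_def]; omega : i ≤ w.1)] at h3
        exact Or.inr (Or.inr ⟨h1, h2, h3⟩)
      · -- up neighbor
        rw [min_eq_right (by rw [Fin.le_def]; omega : w.1 ≤ i)] at h3
        exact Or.inr (Or.inl ⟨h1, h2, (CActLt_iff_prev X j h2).mpr h3⟩)
    · rintro ((⟨h1, h2, h3⟩ | ⟨h1, h2, h3⟩) | (⟨h1, h2, h3⟩ | ⟨h1, h2, h3⟩))
      · refine Or.inl ⟨h1, Or.inr h2, ?_⟩
        rw [min_eq_right (by rw [Fin.le_def]; omega : w.2 ≤ j)]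
        exact (RActLt_iff_prev X i h2).mp h3
      · refine Or.inl ⟨h1, Or.inl h2, ?_⟩
        rw [min_eq_left (by rw [Fin.le_def]; omega : j ≤ w.2)]
        exact h3
      · refine Or.inr ⟨h1, Or.inr h2, ?_⟩
        rw [min_eq_right (by rw [Fin.le_def]; omega : w.1 ≤ i)]
        exact (CActLt_iff_prev X j h2).mp h3
      · refine Or.inr ⟨h1, Or.inl h2, ?_⟩
        rw [min_eq_left (by rw [Fin.le_def]; omega : i ≤ w.1)]
        exact h3
  rw [Finset.filter_congr (fun w _ => hAdj w)]
  rw [Finset.filter_or, Finset.filter_or, Finset.filter_or]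
  have hdisj1 : Disjoint
      (Finset.univ.filter fun w : Fin n × Fin n => i = w.1 ∧ (w.2 : ℕ) + 1 = (j : ℕ) ∧ RActLt X i j)
      (Finset.univ.filter fun w : Fin n × Fin n => i = w.1 ∧ (j : ℕ) + 1 = (w.2 : ℕ) ∧ RAct X i j) := by
    rw [Finset.disjoint_left]
    rintro w hw1 hw2
    simp only [Finset.mem_filter] at hw1 hw2
    omega
  have hdisj2 : Disjoint
      (Finset.univ.filter fun w : Fin n × Fin n => j = w.2 ∧ (w.1 : ℕ) + 1 = (i : ℕ) ∧ CActLt X i j)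
      (Finset.univ.filter fun w : Fin n × Fin n => j = w.2 ∧ (i : ℕ) + 1 = (w.1 : ℕ) ∧ CAct X i j) := by
    rw [Finset.disjoint_left]
    rintro w hw1 hw2
    simp only [Finset.mem_filter] at hw1 hw2
    omega
  have hdisj3 : Disjoint
      ((Finset.univ.filter fun w : Fin n × Fin n => i = w.1 ∧ (w.2 : ℕ) + 1 = (j : ℕ) ∧ RActLt X i j) ∪
        (Finset.univ.filter fun w : Fin n × Fin n => i = w.1 ∧ (j : ℕ) + 1 = (w.2 : ℕ) ∧ RAct X i j))
      ((Finset.univ.filter fun w : Fin n × Fin n => j = w.2 ∧ (w.1 : ℕ) + 1 = (i : ℕ) ∧ CActLt X i j) ∪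
        (Finset.univ.filter fun w : Fin n × Fin n => j = w.2 ∧ (i : ℕ) + 1 = (w.1 : ℕ) ∧ CAct X i j)) := by
    rw [Finset.disjoint_left]
    rintro w hw1 hw2
    simp only [Finset.mem_union, Finset.mem_filter] at hw1 hw2
    have e1 : ∀ (a b : Fin n), a = b → (a : ℕ) = (b : ℕ) := fun a b h => by rw [h]
    rcases hw1 with h | h <;> rcases hw2 with h' | h' <;>
      [skip; skip; skip; skip] <;>
      have := e1 _ _ h.2.1 <;> have := e1 _ _ h'.2.1 <;> omega
  rw [Finset.card_union_of_disjoint hdisj3, Finset.card_union_of_disjoint hdisj1,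
    Finset.card_union_of_disjoint hdisj2]
  have hcL : (Finset.univ.filter fun w : Fin n × Fin n =>
      i = w.1 ∧ (w.2 : ℕ) + 1 = (j : ℕ) ∧ RActLt X i j).card = if RActLt X i j then 1 else 0 := by
    by_cases ha : RActLt X i j
    · rw [if_pos ha]
      have hj0 : 0 < (j : ℕ) := by
        rcases Nat.eq_zero_or_pos (j : ℕ) with h | h
        · exact absurd ha (not_RActLt_zero X i h)
        · exact h
      have hset : (Finset.univ.filter fun w : Fin n × Fin n =>
          i = w.1 ∧ (w.2 : ℕ) + 1 = (j : ℕ) ∧ RActLt X i j) = {(i, fpred j)} := by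
        ext w
        simp only [Finset.mem_filter, Finset.mem_univ, true_and, Finset.mem_singleton]
        constructor
        · rintro ⟨h1, h2, -⟩
          rw [Prod.ext_iff]
          exact ⟨h1.symm, by rw [Fin.ext_iff]; simp [fpred]; omega⟩
        · rintro rfl
          exact ⟨rfl, by simp [fpred]; omega, ha⟩
      rw [hset, Finset.card_singleton]
    · rw [if_neg ha, Finset.card_eq_zero, Finset.filter_eq_empty_iff]
      rintro w - ⟨-, -, hc⟩
      exact ha hc
  have hcR : (Finset.univ.filter fun w : Fin n × Fin n =>
      i = w.1 ∧ (j : ℕ) + 1 = (w.2 : ℕ) ∧ RAct X i j).card = if RAct X i j then 1 else 0 := by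
    by_cases ha : RAct X i j
    · rw [if_pos ha]
      have hjn : (j : ℕ) + 1 < n := by
        rcases Nat.lt_or_ge ((j : ℕ) + 1) n with h | h
        · exact h
        · have hj : (j : ℕ) + 1 = n := by have := j.isLt; omega
          exact absurd ha (not_RAct_last hX i hj)
      have hset : (Finset.univ.filter fun w : Fin n × Fin n =>
          i = w.1 ∧ (j : ℕ) + 1 = (w.2 : ℕ) ∧ RAct X i j) = {(i, ⟨(j : ℕ) + 1, hjn⟩)} := by
        ext w
        simp only [Finset.mem_filter, Finset.mem_univ, true_and, Finset.mem_singleton]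
        constructor
        · rintro ⟨h1, h2, -⟩
          rw [Prod.ext_iff]
          exact ⟨h1.symm, by rw [Fin.ext_iff]; simp; omega⟩
        · rintro rfl
          exact ⟨rfl, by simp, ha⟩
      rw [hset, Finset.card_singleton]
    · rw [if_neg ha, Finset.card_eq_zero, Finset.filter_eq_empty_iff]
      rintro w - ⟨-, -, hc⟩
      exact ha hc
  have hcU : (Finset.univ.filter fun w : Fin n × Fin n =>
      j = w.2 ∧ (w.1 : ℕ) + 1 = (i : ℕ) ∧ CActLt X i j).card = if CActLt X i j then 1 else 0 := by
    by_cases ha : CActLt X i j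
    · rw [if_pos ha]
      have hi0 : 0 < (i : ℕ) := by
        rcases Nat.eq_zero_or_pos (i : ℕ) with h | h
        · exact absurd ha (not_CActLt_zero X j h)
        · exact h
      have hset : (Finset.univ.filter fun w : Fin n × Fin n =>
          j = w.2 ∧ (w.1 : ℕ) + 1 = (i : ℕ) ∧ CActLt X i j) = {(fpred i, j)} := by
        ext w
        simp only [Finset.mem_filter, Finset.mem_univ, true_and, Finset.mem_singleton]
        constructor
        · rintro ⟨h1, h2, -⟩
          rw [Prod.ext_iff]
          exact ⟨by rw [Fin.ext_iff]; simp [fpred]; omega, h1.symm⟩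
        · rintro rfl
          exact ⟨rfl, by simp [fpred]; omega, ha⟩
      rw [hset, Finset.card_singleton]
    · rw [if_neg ha, Finset.card_eq_zero, Finset.filter_eq_empty_iff]
      rintro w - ⟨-, -, hc⟩
      exact ha hc
  have hcD : (Finset.univ.filter fun w : Fin n × Fin n =>
      j = w.2 ∧ (i : ℕ) + 1 = (w.1 : ℕ) ∧ CAct X i j).card = if CAct X i j then 1 else 0 := by
    by_cases ha : CAct X i j
    · rw [if_pos ha]
      have hin : (i : ℕ) + 1 < n := by
        rcases Nat.lt_or_ge ((i : ℕ) + 1) n with h | h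
        · exact h
        · have hi : (i : ℕ) + 1 = n := by have := i.isLt; omega
          exact absurd ha (not_CAct_last hX j hi)
      have hset : (Finset.univ.filter fun w : Fin n × Fin n =>
          j = w.2 ∧ (i : ℕ) + 1 = (w.1 : ℕ) ∧ CAct X i j) = {(⟨(i : ℕ) + 1, hin⟩, j)} := by
        ext w
        simp only [Finset.mem_filter, Finset.mem_univ, true_and, Finset.mem_singleton]
        constructor
        · rintro ⟨h1, h2, -⟩
          rw [Prod.ext_iff]
          exact ⟨by rw [Fin.ext_iff]; simp; omega, h1.symm⟩
        · rintro rfl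
          exact ⟨rfl, by simp, ha⟩
      rw [hset, Finset.card_singleton]
    · rw [if_neg ha, Finset.card_eq_zero, Finset.filter_eq_empty_iff]
      rintro w - ⟨-, -, hc⟩
      exact ha hc
  rw [hcL, hcR, hcU, hcD]
  ring

end Degree
section MemFace

lemma comb_aux {r : ℝ} (hr : 0 < r) (x D : Matrix (Fin n) (Fin n) ℝ) :
    (r / (1 + r)) • D + (1 / (1 + r)) • (x + r • (x - D)) = x := by
  have h : 1 + r ≠ 0 := by positivity
  match_scalars <;> field_simp <;> ring

lemma comb_sum {r : ℝ} (hr : 0 < r) : r / (1 + r) + 1 / (1 + r) = 1 := by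
  have h : 1 + r ≠ 0 := by positivity
  field_simp
  ring

/-- an ASM whose flow agrees with the face on inactive positions belongs to the face -/
lemma mem_face_of_inactive_agree {F : Set (Matrix (Fin n) (Fin n) ℝ)}
    (hF : IsFaceOf F (ASMPolytope n)) {A : Matrix (Fin n) (Fin n) ℝ}
    (hA : A ∈ faceASMs F) {D : Matrix (Fin n) (Fin n) ℝ} (hD : IsASM D)
    (hrow : ∀ i j, ¬ RAct (faceASMs F) i j → rowPartial D i j = rowPartial A i j)
    (hcol : ∀ i j, ¬ CAct (faceASMs F) i j → colPartial D i j = colPartial A i j) :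
    D ∈ F := by
  classical
  set V : Finset (Matrix (Fin n) (Fin n) ℝ) := (faceASMs_finite F).toFinset with hV
  have hmemV : ∀ C, C ∈ V ↔ C ∈ faceASMs F := fun C => (faceASMs_finite F).mem_toFinset
  have hAV : A ∈ V := (hmemV A).mpr hA
  have hVasm : ∀ C ∈ V, IsASM C := fun C hC => ((hmemV C).mp hC).2
  set N : ℕ := V.card with hN
  have hN0 : 0 < N := Finset.card_pos.mpr ⟨A, hAV⟩
  set u : ℝ := (N : ℝ) with hu
  have hu0 : 0 < u := by rw [hu]; exact_mod_cast hN0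
  have hune : u ≠ 0 := ne_of_gt hu0
  set x : Matrix (Fin n) (Fin n) ℝ := u⁻¹ • ∑ C ∈ V, C with hx
  -- x belongs to F
  have hxF : x ∈ F := by
    have hconv : convexHull ℝ (faceASMs F) ⊆ F := convexHull_min faceASMs_subset hF.2
    apply hconv
    have hcm : V.centerMass (fun _ => (1 : ℝ)) id = x := by
      rw [Finset.centerMass, hx]
      simp [Finset.sum_const, hN]
      rfl
    rw [← hcm]
    refine Finset.centerMass_mem_convexHull V (fun C _ => by norm_num)
      (by rw [Finset.sum_const, nsmul_eq_mul, mul_one]; exact_mod_cast hN0)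
      (fun C hC => (hmemV C).mp hC)
  -- partial sums of x
  have hxr : ∀ i j, rowPartial x i j = u⁻¹ * ∑ C ∈ V, rowPartial C i j := by
    intro i j
    rw [hx, rowPartial_smul, rowPartial_sum]
  have hxc : ∀ i j, colPartial x i j = u⁻¹ * ∑ C ∈ V, colPartial C i j := by
    intro i j
    rw [hx, colPartial_smul, colPartial_sum]
  -- inactive row positions: x agrees with A (hence with D)
  have hxr_in : ∀ i j, ¬ RAct (faceASMs F) i j → rowPartial x i j = rowPartial A i j := by
    intro i j hin
    have hall : ∀ C ∈ V, rowPartial C i j = rowPartial A i j := by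
      intro C hC
      by_contra hc
      exact hin ⟨C, (hmemV C).mp hC, A, hA, hc⟩
    rw [hxr, Finset.sum_congr rfl hall, Finset.sum_const, nsmul_eq_mul, ← hN, ← hu,
      ← mul_assoc, inv_mul_cancel₀ hune, one_mul]
  have hxc_in : ∀ i j, ¬ CAct (faceASMs F) i j → colPartial x i j = colPartial A i j := by
    intro i j hin
    have hall : ∀ C ∈ V, colPartial C i j = colPartial A i j := by
      intro C hC
      by_contra hc
      exact hin ⟨C, (hmemV C).mp hC, A, hA, hc⟩
    rw [hxc, Finset.sum_congr rfl hall, Finset.sum_const, nsmul_eq_mul, ← hN, ← hu,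
      ← mul_assoc, inv_mul_cancel₀ hune, one_mul]
  -- active row positions: the average is strictly inside
  have hxr_act : ∀ i j, RAct (faceASMs F) i j →
      1 ≤ ∑ C ∈ V, rowPartial C i j ∧ ∑ C ∈ V, rowPartial C i j ≤ u - 1 := by
    rintro i j ⟨C1, hC1, C2, hC2, hne⟩
    have hC1V : C1 ∈ V := (hmemV C1).mpr hC1
    have hC2V : C2 ∈ V := (hmemV C2).mpr hC2
    obtain ⟨D1, hD1V, hD1val, D0, hD0V, hD0val⟩ :
        ∃ D1 ∈ V, rowPartial D1 i j = 1 ∧ ∃ D0 ∈ V, rowPartial D0 i j = 0 := by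
      rcases hC1.2.2.1 i j with h1 | h1 <;> rcases hC2.2.2.1 i j with h2 | h2
      · exact absurd (h1.trans h2.symm) hne
      · exact ⟨C2, hC2V, h2, C1, hC1V, h1⟩
      · exact ⟨C1, hC1V, h1, C2, hC2V, h2⟩
      · exact absurd (h1.trans h2.symm) hne
    constructor
    · calc (1:ℝ) = rowPartial D1 i j := hD1val.symm
        _ ≤ ∑ C ∈ V, rowPartial C i j := by
          refine Finset.single_le_sum (f := fun C => rowPartial C i j) (fun C hC => ?_) hD1V
          rcases (hVasm C hC).2.1 i j with h | h <;> simp [h]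
    · have hub : ∀ C ∈ V.erase D0, rowPartial C i j ≤ 1 := by
        intro C hC
        rcases (hVasm C (Finset.mem_of_mem_erase hC)).2.1 i j with h | h <;> rw [h] <;> norm_num
      have hbound : ∑ C ∈ V.erase D0, rowPartial C i j ≤ ((V.erase D0).card : ℝ) := by
        have hb := Finset.sum_le_card_nsmul (V.erase D0) (fun C => rowPartial C i j) 1 hub
        rwa [nsmul_eq_mul, mul_one] at hb
      have hcarde : (V.erase D0).card = N - 1 := Finset.card_erase_of_mem hD0V
      have hcast : ((N - 1 : ℕ) : ℝ) = u - 1 := by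
        have h1 : (1:ℕ) ≤ N := hN0
        rw [hu, Nat.cast_sub h1, Nat.cast_one]
      rw [hcarde, hcast] at hbound
      calc ∑ C ∈ V, rowPartial C i j
          = rowPartial D0 i j + ∑ C ∈ V.erase D0, rowPartial C i j :=
            (Finset.add_sum_erase V (fun C => rowPartial C i j) hD0V).symm
        _ = ∑ C ∈ V.erase D0, rowPartial C i j := by rw [hD0val]; ring
        _ ≤ u - 1 := hbound
  have hxc_act : ∀ i j, CAct (faceASMs F) i j →
      1 ≤ ∑ C ∈ V, colPartial C i j ∧ ∑ C ∈ V, colPartial C i j ≤ u - 1 := by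
    rintro i j ⟨C1, hC1, C2, hC2, hne⟩
    have hC1V : C1 ∈ V := (hmemV C1).mpr hC1
    have hC2V : C2 ∈ V := (hmemV C2).mpr hC2
    obtain ⟨D1, hD1V, hD1val, D0, hD0V, hD0val⟩ :
        ∃ D1 ∈ V, colPartial D1 i j = 1 ∧ ∃ D0 ∈ V, colPartial D0 i j = 0 := by
      rcases hC1.2.2.2.1 i j with h1 | h1 <;> rcases hC2.2.2.2.1 i j with h2 | h2
      · exact absurd (h1.trans h2.symm) hne
      · exact ⟨C2, hC2V, h2, C1, hC1V, h1⟩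
      · exact ⟨C1, hC1V, h1, C2, hC2V, h2⟩
      · exact absurd (h1.trans h2.symm) hne
    constructor
    · calc (1:ℝ) = colPartial D1 i j := hD1val.symm
        _ ≤ ∑ C ∈ V, colPartial C i j := by
          refine Finset.single_le_sum (f := fun C => colPartial C i j) (fun C hC => ?_) hD1V
          rcases (hVasm C hC).2.2.1 i j with h | h <;> simp [h]
    · have hub : ∀ C ∈ V.erase D0, colPartial C i j ≤ 1 := by
        intro C hC
        rcases (hVasm C (Finset.mem_of_mem_erase hC)).2.2.1 i j with h | h <;> rw [h] <;> norm_num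
      have hbound : ∑ C ∈ V.erase D0, colPartial C i j ≤ ((V.erase D0).card : ℝ) := by
        have hb := Finset.sum_le_card_nsmul (V.erase D0) (fun C => colPartial C i j) 1 hub
        rwa [nsmul_eq_mul, mul_one] at hb
      have hcarde : (V.erase D0).card = N - 1 := Finset.card_erase_of_mem hD0V
      have hcast : ((N - 1 : ℕ) : ℝ) = u - 1 := by
        have h1 : (1:ℕ) ≤ N := hN0
        rw [hu, Nat.cast_sub h1, Nat.cast_one]
      rw [hcarde, hcast] at hbound
      calc ∑ C ∈ V, colPartial C i j
          = colPartial D0 i j + ∑ C ∈ V.erase D0, colPartial C i j :=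
            (Finset.add_sum_erase V (fun C => colPartial C i j) hD0V).symm
        _ = ∑ C ∈ V.erase D0, colPartial C i j := by rw [hD0val]; ring
        _ ≤ u - 1 := hbound
  -- the perturbed point
  clear hx
  clear_value x
  have ht0 : 0 < u⁻¹ := inv_pos.mpr hu0
  set w : Matrix (Fin n) (Fin n) ℝ := x + u⁻¹ • (x - D) with hw
  have hwr : ∀ i j, rowPartial w i j
      = rowPartial x i j + u⁻¹ * (rowPartial x i j - rowPartial D i j) := by
    intro i j
    rw [hw, rowPartial_add, rowPartial_smul, rowPartial_sub]
  have hwc : ∀ i j, colPartial w i j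
      = colPartial x i j + u⁻¹ * (colPartial x i j - colPartial D i j) := by
    intro i j
    rw [hw, colPartial_add, colPartial_smul, colPartial_sub]
  -- generic bound derivation
  have hbnd : ∀ (S d : ℝ), (1 ≤ S) → (S ≤ u - 1) → (d = 0 ∨ d = 1) →
      0 ≤ u⁻¹ * S + u⁻¹ * (u⁻¹ * S - d) ∧ u⁻¹ * S + u⁻¹ * (u⁻¹ * S - d) ≤ 1 := by
    intro S d hS1 hS2 hd
    have hr0 : 0 < u⁻¹ := ht0
    have hru : u⁻¹ * u = 1 := inv_mul_cancel₀ hune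
    have hrS : u⁻¹ * S ≤ 1 - u⁻¹ := by
      have h := mul_le_mul_of_nonneg_left hS2 (le_of_lt hr0)
      calc u⁻¹ * S ≤ u⁻¹ * (u - 1) := h
        _ = u⁻¹ * u - u⁻¹ := by ring
        _ = 1 - u⁻¹ := by rw [hru]
    have hrS1 : u⁻¹ ≤ u⁻¹ * S := by nlinarith
    rcases hd with rfl | rfl
    · constructor <;> nlinarith
    · constructor <;> nlinarith
  have hwHP : w ∈ HP n := by
    have hAHP : A ∈ HP n := hA.2.mem_HP
    refine ⟨fun i j => ?_, fun i j => ?_, fun i => ?_, fun j => ?_⟩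
    · rw [hwr]
      by_cases hact : RAct (faceASMs F) i j
      · obtain ⟨hS1, hS2⟩ := hxr_act i j hact
        rw [hxr]
        exact hbnd _ _ hS1 hS2 (hD.2.1 i j)
      · rw [hxr_in i j hact, hrow i j hact]
        have hb := hAHP.1 i j
        constructor <;> [linarith [hb.1]; linarith [hb.2]]
    · rw [hwc]
      by_cases hact : CAct (faceASMs F) i j
      · obtain ⟨hS1, hS2⟩ := hxc_act i j hact
        rw [hxc]
        exact hbnd _ _ hS1 hS2 (hD.2.2.1 i j)
      · rw [hxc_in i j hact, hcol i j hact]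
        have hb := hAHP.2.1 i j
        constructor <;> [linarith [hb.1]; linarith [hb.2]]
    · have hn : 0 < n := i.pos
      have hj : ((⟨n - 1, by omega⟩ : Fin n) : ℕ) + 1 = n := by simp; omega
      rw [← rowPartial_eq_sum w i hj, hwr,
        hxr_in i ⟨n - 1, by omega⟩ (not_RAct_last (fun C hC => hC.2) i hj),
        rowPartial_eq_sum A i hj, hA.2.2.2.2.1 i, rowPartial_eq_sum D i hj, hD.2.2.2.1 i]
      ring
    · have hn : 0 < n := j.pos
      have hi : ((⟨n - 1, by omega⟩ : Fin n) : ℕ) + 1 = n := by simp; omega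
      rw [← colPartial_eq_sum w j hi, hwc,
        hxc_in ⟨n - 1, by omega⟩ j (not_CAct_last (fun C hC => hC.2) j hi),
        colPartial_eq_sum A j hi, hA.2.2.2.2.2 j, colPartial_eq_sum D j hi, hD.2.2.2.2 j]
      ring
  -- conclude by extremality
  have hwP : w ∈ ASMPolytope n := HP_subset_ASMPolytope hwHP
  have hDP : D ∈ ASMPolytope n := subset_convexHull ℝ _ hD
  have hcomb : (u⁻¹ / (1 + u⁻¹)) • D + (1 / (1 + u⁻¹)) • w = x := by
    rw [hw]
    exact comb_aux ht0 x D
  have hopen : x ∈ openSegment ℝ D w :=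
    ⟨u⁻¹ / (1 + u⁻¹), 1 / (1 + u⁻¹), div_pos ht0 (by linarith), div_pos one_pos (by linarith),
      comb_sum ht0, hcomb⟩
  exact hF.1.2 hDP hwP hxF hopen

end MemFace
section Final

lemma rowP_lin (i j : Fin n) : ∀ (a b : ℝ) (x y : Matrix (Fin n) (Fin n) ℝ), a + b = 1 →
    rowPartial (a • x + b • y) i j = a * rowPartial x i j + b * rowPartial y i j := by
  intro a b x y _
  rw [rowPartial_add, rowPartial_smul, rowPartial_smul]

lemma colP_lin (i j : Fin n) : ∀ (a b : ℝ) (x y : Matrix (Fin n) (Fin n) ℝ), a + b = 1 →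
    colPartial (a • x + b • y) i j = a * colPartial x i j + b * colPartial y i j := by
  intro a b x y _
  rw [colPartial_add, colPartial_smul, colPartial_smul]

lemma rowPLt_lin (i j : Fin n) : ∀ (a b : ℝ) (x y : Matrix (Fin n) (Fin n) ℝ), a + b = 1 →
    rowPartialLt (a • x + b • y) i j = a * rowPartialLt x i j + b * rowPartialLt y i j := by
  intro a b x y _
  rw [rowPartialLt_add, rowPartialLt_smul, rowPartialLt_smul]

lemma colPLt_lin (i j : Fin n) : ∀ (a b : ℝ) (x y : Matrix (Fin n) (Fin n) ℝ), a + b = 1 →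
    colPartialLt (a • x + b • y) i j = a * colPartialLt x i j + b * colPartialLt y i j := by
  intro a b x y _
  rw [colPartialLt_add, colPartialLt_smul, colPartialLt_smul]

lemma face_bd_row {F : Set (Matrix (Fin n) (Fin n) ℝ)} (hF : IsFaceOf F (ASMPolytope n))
    (i j : Fin n) : ∀ x ∈ F, 0 ≤ rowPartial x i j ∧ rowPartial x i j ≤ 1 :=
  fun x hx => (ASMPolytope_subset_HP (hF.1.1 hx)).1 i j

lemma face_bd_col {F : Set (Matrix (Fin n) (Fin n) ℝ)} (hF : IsFaceOf F (ASMPolytope n))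
    (i j : Fin n) : ∀ x ∈ F, 0 ≤ colPartial x i j ∧ colPartial x i j ≤ 1 :=
  fun x hx => (ASMPolytope_subset_HP (hF.1.1 hx)).2.1 i j

lemma face_bd_rowLt {F : Set (Matrix (Fin n) (Fin n) ℝ)} (hF : IsFaceOf F (ASMPolytope n))
    (i j : Fin n) : ∀ x ∈ F, 0 ≤ rowPartialLt x i j ∧ rowPartialLt x i j ≤ 1 :=
  fun x hx => rowPartialLt_bounds (ASMPolytope_subset_HP (hF.1.1 hx)) i j

lemma face_bd_colLt {F : Set (Matrix (Fin n) (Fin n) ℝ)} (hF : IsFaceOf F (ASMPolytope n))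
    (i j : Fin n) : ∀ x ∈ F, 0 ≤ colPartialLt x i j ∧ colPartialLt x i j ≤ 1 :=
  fun x hx => colPartialLt_bounds (ASMPolytope_subset_HP (hF.1.1 hx)) i j

/-- the partial sums of any ASM estranged from `A` are the flips of those of `A` -/
lemma estranged_partials {F : Set (Matrix (Fin n) (Fin n) ℝ)}
    (hF : IsFaceOf F (ASMPolytope n)) {A B : Matrix (Fin n) (Fin n) ℝ}
    (hA : A ∈ faceASMs F) (hB : B ∈ faceASMs F) (hE : Estranged F A B) :
    (∀ i j, rowPartial B i j =
      if RAct (faceASMs F) i j then 1 - rowPartial A i j else rowPartial A i j) ∧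
    (∀ i j, colPartial B i j =
      if CAct (faceASMs F) i j then 1 - colPartial A i j else colPartial A i j) := by
  constructor
  · intro i j
    by_cases hact : RAct (faceASMs F) i j
    · rw [if_pos hact]
      obtain ⟨C, hC, hgC⟩ := (RAct_iff hA i j).mp hact
      have hne : rowPartial B i j ≠ rowPartial A i j := by
        intro he
        exact not_estranged_of_level hF.2 (fun M => rowPartial M i j) (rowP_lin i j)
          (face_bd_row hF i j) (hA.2.2.1 i j) hA.1 hB.1 hC.1 rfl he hgC hE
      exact flip_val (hB.2.2.1 i j) (hA.2.2.1 i j) hne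
    · rw [if_neg hact]
      by_contra hc
      exact hact ⟨B, hB, A, hA, hc⟩
  · intro i j
    by_cases hact : CAct (faceASMs F) i j
    · rw [if_pos hact]
      obtain ⟨C, hC, hgC⟩ := (CAct_iff hA i j).mp hact
      have hne : colPartial B i j ≠ colPartial A i j := by
        intro he
        exact not_estranged_of_level hF.2 (fun M => colPartial M i j) (colP_lin i j)
          (face_bd_col hF i j) (hA.2.2.2.1 i j) hA.1 hB.1 hC.1 rfl he hgC hE
      exact flip_val (hB.2.2.2.1 i j) (hA.2.2.2.1 i j) hne
    · rw [if_neg hact]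
      by_contra hc
      exact hact ⟨B, hB, A, hA, hc⟩

end Final

/-- if all vertices of `G(F)` have even degree, every vertex `A` of the
face `F` has a unique estranged partner `B`, obtained by reversing in the simple flow
grid of `A` precisely the arcs corresponding to edges of `G(F)`; if `G(F)` has a
vertex of odd degree, no two vertices of `F` are estranged in `F`. -/
theorem estranged_dichotomy (n : ℕ) (F : Set (Matrix (Fin n) (Fin n) ℝ))
    (hF : IsFaceOf F (ASMPolytope n)) :
    ((∀ v, Even (ddDegree (faceASMs F) v)) →
      ∀ A ∈ faceASMs F,
        (∃! B, B ∈ faceASMs F ∧ Estranged F A B) ∧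
        (∀ B, B ∈ faceASMs F → Estranged F A B →
          (∀ i j : Fin n,
            rowPartial B i j =
              if ∃ C ∈ faceASMs F, rowPartial C i j ≠ rowPartial A i j then
                1 - rowPartial A i j
              else rowPartial A i j) ∧
          (∀ i j : Fin n,
            colPartial B i j =
              if ∃ C ∈ faceASMs F, colPartial C i j ≠ colPartial A i j then
                1 - colPartial A i j
              else colPartial A i j))) ∧
    ((∃ v, ¬ Even (ddDegree (faceASMs F) v)) →
      ∀ A ∈ faceASMs F, ∀ B ∈ faceASMs F, ¬ Estranged F A B) := by
  have hXasm : ∀ C ∈ faceASMs F, IsASM C := fun C hC => hC.2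
  constructor
  · intro hEven A hA
    have hEv' : ∀ i j : Fin n, Even ((if RActLt (faceASMs F) i j then 1 else 0) +
        (if RAct (faceASMs F) i j then 1 else 0) + (if CActLt (faceASMs F) i j then 1 else 0) +
        (if CAct (faceASMs F) i j then (1:ℕ) else 0)) := by
      intro i j
      have h := hEven (i, j)
      rwa [ddDegree_eq hXasm i j] at h
    have hBASM : IsASM (flipASM (faceASMs F) A) := isASM_flipASM hXasm hA hEv'
    have hBr : ∀ i j, rowPartial (flipASM (faceASMs F) A) i j =
        if RAct (faceASMs F) i j then 1 - rowPartial A i j else rowPartial A i j := by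
      intro i j
      rw [rowPartial_flipASM, flipR]
    have hBc : ∀ i j, colPartial (flipASM (faceASMs F) A) i j =
        if CAct (faceASMs F) i j then 1 - colPartial A i j else colPartial A i j := by
      intro i j
      rw [colPartial_flipASM hXasm hA hEv', flipC]
    have hBF : flipASM (faceASMs F) A ∈ F := mem_face_of_inactive_agree hF hA hBASM
      (fun i j hin => by rw [hBr, if_neg hin]) (fun i j hin => by rw [hBc, if_neg hin])
    have hBmem : flipASM (faceASMs F) A ∈ faceASMs F := ⟨hBF, hBASM⟩
    have hEst : Estranged F A (flipASM (faceASMs F) A) := by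
      rintro F' hface hne ⟨hAF', hBF'⟩
      apply hne
      have hVsub : ∀ C ∈ faceASMs F, C ∈ F' := by
        intro C hC
        have hCr : ∀ i j, rowPartial (A + flipASM (faceASMs F) A - C) i j =
            if RAct (faceASMs F) i j then 1 - rowPartial C i j else rowPartial C i j := by
          intro i j
          rw [rowPartial_sub, rowPartial_add, hBr]
          by_cases hact : RAct (faceASMs F) i j
          · rw [if_pos hact, if_pos hact]
            ring
          · rw [if_neg hact, if_neg hact]
            have hag : rowPartial C i j = rowPartial A i j := by
              by_contra hc
              exact hact ⟨C, hC, A, hA, hc⟩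
            rw [hag]
            ring
        have hCc : ∀ i j, colPartial (A + flipASM (faceASMs F) A - C) i j =
            if CAct (faceASMs F) i j then 1 - colPartial C i j else colPartial C i j := by
          intro i j
          rw [colPartial_sub, colPartial_add, hBc]
          by_cases hact : CAct (faceASMs F) i j
          · rw [if_pos hact, if_pos hact]
            ring
          · rw [if_neg hact, if_neg hact]
            have hag : colPartial C i j = colPartial A i j := by
              by_contra hc
              exact hact ⟨C, hC, A, hA, hc⟩
            rw [hag]
            ring
        have hCASM : IsASM (A + flipASM (faceASMs F) A - C) := by
          refine isASM_of_partials (fun i j => ?_) (fun i j => ?_) (fun i => ?_) (fun j => ?_)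
          · rw [hCr]
            split_ifs
            · rcases hC.2.2.1 i j with h | h <;> rw [h] <;> [right; left] <;> norm_num
            · exact hC.2.2.1 i j
          · rw [hCc]
            split_ifs
            · rcases hC.2.2.2.1 i j with h | h <;> rw [h] <;> [right; left] <;> norm_num
            · exact hC.2.2.2.1 i j
          · have hn : 0 < n := i.pos
            have hj : ((⟨n - 1, by omega⟩ : Fin n) : ℕ) + 1 = n := by simp; omega
            rw [← rowPartial_eq_sum _ i hj, hCr, if_neg (not_RAct_last hXasm i hj),
              rowPartial_eq_sum C i hj, hC.2.2.2.2.1 i]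
          · have hn : 0 < n := j.pos
            have hi : ((⟨n - 1, by omega⟩ : Fin n) : ℕ) + 1 = n := by simp; omega
            rw [← colPartial_eq_sum _ j hi, hCc, if_neg (not_CAct_last hXasm j hi),
              colPartial_eq_sum C j hi, hC.2.2.2.2.2 j]
        have hCstarF : A + flipASM (faceASMs F) A - C ∈ F :=
          mem_face_of_inactive_agree hF hA hCASM
            (fun i j hin => by
              rw [hCr, if_neg hin]
              by_contra hc
              exact hin ⟨C, hC, A, hA, hc⟩)
            (fun i j hin => by
              rw [hCc, if_neg hin]
              by_contra hc
              exact hin ⟨C, hC, A, hA, hc⟩)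
        have hM : (1/2 : ℝ) • A + (1/2 : ℝ) • flipASM (faceASMs F) A ∈ F' :=
          hface.2 hAF' hBF' (by norm_num) (by norm_num) (by norm_num)
        have hMseg : (1/2 : ℝ) • A + (1/2 : ℝ) • flipASM (faceASMs F) A ∈
            openSegment ℝ C (A + flipASM (faceASMs F) A - C) := by
          refine ⟨1/2, 1/2, by norm_num, by norm_num, by norm_num, ?_⟩
          match_scalars <;> ring
        exact hface.1.2 hC.1 hCstarF hM hMseg
      apply Set.Subset.antisymm hface.1.1
      intro x hx
      exact convexHull_min hVsub hface.2 (face_eq_hull_faceASMs hF hx)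
    constructor
    · refine ⟨flipASM (faceASMs F) A, ⟨hBmem, hEst⟩, ?_⟩
      rintro B' ⟨hB'mem, hB'E⟩
      have hp := (estranged_partials hF hA hB'mem hB'E).1
      apply ext_of_rowPartial
      intro i j
      rw [hp i j, hBr i j]
    · intro B' hB'mem hB'E
      obtain ⟨hp1, hp2⟩ := estranged_partials hF hA hB'mem hB'E
      constructor
      · intro i j
        rw [hp1 i j]
        by_cases h : RAct (faceASMs F) i j
        · rw [if_pos h, if_pos ((RAct_iff hA i j).mp h)]
        · rw [if_neg h, if_neg (fun hc => h ((RAct_iff hA i j).mpr hc))]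
      · intro i j
        rw [hp2 i j]
        by_cases h : CAct (faceASMs F) i j
        · rw [if_pos h, if_pos ((CAct_iff hA i j).mp h)]
        · rw [if_neg h, if_neg (fun hc => h ((CAct_iff hA i j).mpr hc))]
  · rintro ⟨⟨i, j⟩, hv⟩ A hA B hB hE
    rw [ddDegree_eq hXasm i j] at hv
    have hpar := pair_parity hA.2 hB.2 i j
    have key : ∀ (g : Matrix (Fin n) (Fin n) ℝ → ℝ),
        (∀ (a b : ℝ) (x y : Matrix (Fin n) (Fin n) ℝ), a + b = 1 →
          g (a • x + b • y) = a * g x + b * g y) →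
        (∀ x ∈ F, 0 ≤ g x ∧ g x ≤ 1) → (g A = 0 ∨ g A = 1) → g A = g B →
        (∃ C ∈ faceASMs F, g C ≠ g A) → False := by
      rintro g hlin hbd hval hAB ⟨C, hC, hgC⟩
      exact not_estranged_of_level hF.2 g hlin hbd hval hA.1 hB.1 hC.1 rfl hAB.symm hgC hE
    have h1 : RActLt (faceASMs F) i j → rowPartialLt A i j ≠ rowPartialLt B i j := by
      intro ha he
      obtain ⟨C, hC, hgC⟩ := (RActLt_iff hA i j).mp ha
      exact key (fun M => rowPartialLt M i j) (rowPLt_lin i j) (face_bd_rowLt hF i j)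
        (rowPartialLt_mem hA.2.2.1 i j) he ⟨C, hC, hgC⟩
    have h2 : RAct (faceASMs F) i j → rowPartial A i j ≠ rowPartial B i j := by
      intro ha he
      obtain ⟨C, hC, hgC⟩ := (RAct_iff hA i j).mp ha
      exact key (fun M => rowPartial M i j) (rowP_lin i j) (face_bd_row hF i j)
        (hA.2.2.1 i j) he ⟨C, hC, hgC⟩
    have h3 : CActLt (faceASMs F) i j → colPartialLt A i j ≠ colPartialLt B i j := by
      intro ha he
      obtain ⟨C, hC, hgC⟩ := (CActLt_iff hA i j).mp ha
      exact key (fun M => colPartialLt M i j) (colPLt_lin i j) (face_bd_colLt hF i j)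
        (colPartialLt_mem hA.2.2.2.1 i j) he ⟨C, hC, hgC⟩
    have h4 : CAct (faceASMs F) i j → colPartial A i j ≠ colPartial B i j := by
      intro ha he
      obtain ⟨C, hC, hgC⟩ := (CAct_iff hA i j).mp ha
      exact key (fun M => colPartial M i j) (colP_lin i j) (face_bd_col hF i j)
        (hA.2.2.2.1 i j) he ⟨C, hC, hgC⟩
    have e1 : (if RActLt (faceASMs F) i j then (1:ℕ) else 0)
        = (if rowPartialLt A i j ≠ rowPartialLt B i j then 1 else 0) := by
      by_cases ha : RActLt (faceASMs F) i j
      · rw [if_pos ha, if_pos (h1 ha)]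
      · rw [if_neg ha, if_neg (fun hd => ha ⟨A, hA, B, hB, hd⟩)]
    have e2 : (if RAct (faceASMs F) i j then (1:ℕ) else 0)
        = (if rowPartial A i j ≠ rowPartial B i j then 1 else 0) := by
      by_cases ha : RAct (faceASMs F) i j
      · rw [if_pos ha, if_pos (h2 ha)]
      · rw [if_neg ha, if_neg (fun hd => ha ⟨A, hA, B, hB, hd⟩)]
    have e3 : (if CActLt (faceASMs F) i j then (1:ℕ) else 0)
        = (if colPartialLt A i j ≠ colPartialLt B i j then 1 else 0) := by
      by_cases ha : CActLt (faceASMs F) i j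
      · rw [if_pos ha, if_pos (h3 ha)]
      · rw [if_neg ha, if_neg (fun hd => ha ⟨A, hA, B, hB, hd⟩)]
    have e4 : (if CAct (faceASMs F) i j then (1:ℕ) else 0)
        = (if colPartial A i j ≠ colPartial B i j then 1 else 0) := by
      by_cases ha : CAct (faceASMs F) i j
      · rw [if_pos ha, if_pos (h4 ha)]
      · rw [if_neg ha, if_neg (fun hd => ha ⟨A, hA, B, hB, hd⟩)]
    rw [e1, e2, e3, e4] at hv
    exact hv hpar

end ASMPaper
end
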